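/- arXiv:2208.01310 — 9 statements merged into one kernel-verified Lean document; each statement's English description precedes it below -/
import Mathlib

section
/- Let X be a graph admitting a pair of disjoint automorphisms σ, τ, and let k ∈ N with k ≤ min(ord(σ), ord(τ)). Define u^ρ_{xy} = Σ_{r=1}^{k} δ_{x,σ^r(y)} p_r + Σ_{s=1}^{k} δ_{x,τ^s(y)} q_s − δ_{xy}·1 ∈ M_k(C), where p_r and q_s are the diagonal and 'Fourier' rank-one projections on C^k as for the cyclic group Z/kZ. Then each u^ρ_{xy} is a projection, all rows and columns (u^ρ_{x·})_y and (u^ρ_{·y})_x sum to 1, and u^ρ commutes with the adjacency matrix of X; i.e. (C^k, u^ρ) is a quantum automorphism of X of dimension k. -/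
noncomputable section

open Matrix

def diagProj (k : ℕ) (i : Fin k) : Matrix (Fin k) (Fin k) ℂ :=
  Matrix.single i i 1

def fourierProj (k : ℕ) (j : Fin k) : Matrix (Fin k) (Fin k) ℂ :=
  Matrix.of fun a b => (k : ℂ)⁻¹ *
    Complex.exp (2 * (Real.pi : ℂ) * Complex.I * (j : ℕ) * (((a : ℤ) - (b : ℤ) : ℤ) : ℂ) / k)

def ee (k : ℕ) (m : ℤ) : ℂ := Complex.exp (2 * (Real.pi : ℂ) * Complex.I * m / k)

lemma ee_congr (k : ℕ) {m n : ℤ} (h : m = n) : ee k m = ee k n := by rw [h]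

lemma ee_add (k : ℕ) (m n : ℤ) : ee k (m + n) = ee k m * ee k n := by
  rw [ee, ee, ee, ← Complex.exp_add]; congr 1; push_cast; ring

lemma ee_conj (k : ℕ) (m : ℤ) : star (ee k m) = ee k (-m) := by
  rw [ee, ee, Complex.star_def, ← Complex.exp_conj]
  congr 1
  have h2 : (starRingEnd ℂ) (2 : ℂ) = 2 := by exact_mod_cast Complex.conj_ofReal 2
  simp [map_div₀, Complex.conj_I, h2]
  try push_cast
  try ring

lemma ee_pow (k : ℕ) (m : ℤ) (c : ℕ) : ee k m ^ c = ee k (m * c) := by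
  rw [ee, ee, ← Complex.exp_nat_mul]; congr 1; push_cast; ring

lemma ee_int_mul (k : ℕ) (hk : 0 < k) (d : ℤ) : ee k ((k : ℤ) * d) = 1 := by
  have hk0 : (k : ℂ) ≠ 0 := Nat.cast_ne_zero.mpr hk.ne'
  rw [ee, show 2 * (Real.pi : ℂ) * Complex.I * ((k : ℤ) * d : ℤ) / k
      = (d : ℤ) * (2 * (Real.pi : ℂ) * Complex.I) by push_cast; field_simp,
    Complex.exp_int_mul_two_pi_mul_I]

lemma ee_eq_one_of_dvd (k : ℕ) (hk : 0 < k) {m : ℤ} (h : (k : ℤ) ∣ m) : ee k m = 1 := by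
  obtain ⟨d, rfl⟩ := h; exact ee_int_mul k hk d

lemma ee_ne_one (k : ℕ) (hk : 0 < k) {m : ℤ} (h : ¬ (k : ℤ) ∣ m) : ee k m ≠ 1 := by
  intro hee
  apply h
  rw [ee, Complex.exp_eq_one_iff] at hee
  obtain ⟨n, hn⟩ := hee
  have hk0 : (k : ℂ) ≠ 0 := Nat.cast_ne_zero.mpr hk.ne'
  have hπ : (Real.pi : ℂ) ≠ 0 := by exact_mod_cast Real.pi_ne_zero
  have hI : Complex.I ≠ 0 := Complex.I_ne_zero
  have h2 : (2 * (Real.pi : ℂ) * Complex.I) ≠ 0 :=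
    mul_ne_zero (mul_ne_zero two_ne_zero hπ) hI
  have h4 : (2 * (Real.pi : ℂ) * Complex.I) * (m : ℂ)
      = (2 * (Real.pi : ℂ) * Complex.I) * ((n : ℂ) * (k : ℂ)) := by
    field_simp at hn
    linear_combination (2 * (Real.pi : ℂ) * Complex.I) * hn
  have h5 : (m : ℂ) = ((n * k : ℤ) : ℂ) := by
    push_cast
    exact mul_left_cancel₀ h2 h4
  have h6 : m = n * k := by exact_mod_cast h5
  exact ⟨n, by rw [h6, mul_comm]⟩

lemma sum_ee (k : ℕ) (hk : 0 < k) (m : ℤ) :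
    ∑ c : Fin k, ee k (m * (c : ℤ)) = if (k : ℤ) ∣ m then (k : ℂ) else 0 := by
  have h1 : ∀ c : Fin k, ee k (m * (c : ℤ)) = ee k m ^ (c : ℕ) := by
    intro c; rw [ee_pow]
  simp_rw [h1]
  rw [Fin.sum_univ_eq_sum_range (fun i => ee k m ^ i) k]
  by_cases hd : (k : ℤ) ∣ m
  · rw [ee_eq_one_of_dvd k hk hd]; simp [hd]
  · rw [geom_sum_eq (ee_ne_one k hk hd), ee_pow, ee_eq_one_of_dvd k hk ⟨m, mul_comm m k⟩]
    simp [hd]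

lemma fin_dvd_iff (k : ℕ) (a b : Fin k) : (k : ℤ) ∣ ((a : ℤ) - (b : ℤ)) ↔ a = b := by
  constructor
  · rintro ⟨d, hd⟩
    have h1 : (a : ℤ) < k := by exact_mod_cast a.isLt
    have h2 : (b : ℤ) < k := by exact_mod_cast b.isLt
    have h3 : (0 : ℤ) ≤ (a : ℤ) := Int.ofNat_nonneg _
    have h4 : (0 : ℤ) ≤ (b : ℤ) := Int.ofNat_nonneg _
    have hk : (0 : ℤ) < k := by omega
    have hd0 : d = 0 := by
      rcases lt_trichotomy d 0 with h | h | h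
      · nlinarith
      · exact h
      · nlinarith
    subst hd0
    have : (a : ℤ) = b := by omega
    exact Fin.ext (by exact_mod_cast this)
  · rintro rfl; simp

lemma fourierProj_apply (k : ℕ) (j : Fin k) (a b : Fin k) :
    fourierProj k j a b = (k : ℂ)⁻¹ * ee k ((j : ℤ) * ((a : ℤ) - (b : ℤ))) := by
  rw [fourierProj, ee]
  simp only [Matrix.of_apply]
  congr 2
  push_cast
  ring

lemma fourierProj_herm (k : ℕ) (j : Fin k) : (fourierProj k j).IsHermitian := by
  rw [Matrix.IsHermitian]
  ext a b
  rw [Matrix.conjTranspose_apply, fourierProj_apply, fourierProj_apply, star_mul', ee_conj]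
  congr 1
  · simp
  · exact ee_congr k (by ring)

lemma fourierProj_mul (k : ℕ) (hk : 0 < k) (j j' : Fin k) :
    fourierProj k j * fourierProj k j' = if j' = j then fourierProj k j else 0 := by
  have hk0 : (k : ℂ) ≠ 0 := Nat.cast_ne_zero.mpr hk.ne'
  ext a b
  rw [Matrix.mul_apply]
  have h1 : ∀ c : Fin k, fourierProj k j a c * fourierProj k j' c b
      = (k : ℂ)⁻¹ * (k : ℂ)⁻¹ * ee k ((j : ℤ) * a - (j' : ℤ) * b)
        * ee k (((j' : ℤ) - (j : ℤ)) * (c : ℤ)) := by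
    intro c
    have emul : ee k ((j : ℤ) * ((a : ℤ) - c)) * ee k ((j' : ℤ) * ((c : ℤ) - b))
        = ee k ((j : ℤ) * a - (j' : ℤ) * b) * ee k (((j' : ℤ) - (j : ℤ)) * (c : ℤ)) := by
      rw [← ee_add, ← ee_add]; exact ee_congr k (by ring)
    rw [fourierProj_apply, fourierProj_apply, mul_mul_mul_comm, emul, ← mul_assoc]
  rw [Finset.sum_congr rfl (fun c _ => h1 c)]
  rw [← Finset.mul_sum, sum_ee k hk]
  have hdvd : ((k : ℤ) ∣ ((j' : ℤ) - (j : ℤ))) ↔ j' = j := fin_dvd_iff k j' j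
  by_cases hjj : j' = j
  · subst hjj
    rw [if_pos (hdvd.mpr rfl), if_pos rfl, fourierProj_apply,
      show ((j' : ℤ) * a - (j' : ℤ) * b) = (j' : ℤ) * ((a : ℤ) - b) from by ring]
    field_simp
  · rw [if_neg (fun h => hjj (hdvd.mp h)), if_neg hjj]
    simp

lemma sum_fourierProj (k : ℕ) (hk : 0 < k) : ∑ j : Fin k, fourierProj k j = 1 := by
  have hk0 : (k : ℂ) ≠ 0 := Nat.cast_ne_zero.mpr hk.ne'
  ext a b
  rw [Matrix.sum_apply]
  have h1 : ∀ j : Fin k, fourierProj k j a b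
      = (k : ℂ)⁻¹ * ee k (((a : ℤ) - (b : ℤ)) * (j : ℤ)) := by
    intro j; rw [fourierProj_apply]; congr 1; exact ee_congr k (by ring)
  rw [Finset.sum_congr rfl (fun j _ => h1 j), ← Finset.mul_sum, sum_ee k hk]
  by_cases hab : a = b
  · subst hab
    rw [if_pos ((fin_dvd_iff k a a).mpr rfl), Matrix.one_apply_eq]
    field_simp
  · rw [if_neg (fun h => hab ((fin_dvd_iff k a b).mp h)), Matrix.one_apply_ne hab]
    simp

lemma diagProj_herm (k : ℕ) (i : Fin k) : (diagProj k i).IsHermitian := by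
  rw [Matrix.IsHermitian, diagProj]
  ext a b
  simp [Matrix.conjTranspose_apply, Matrix.single, and_comm]

lemma diagProj_mul (k : ℕ) (i i' : Fin k) :
    diagProj k i * diagProj k i' = if i' = i then diagProj k i else 0 := by
  by_cases h : i' = i
  · subst h; rw [if_pos rfl, diagProj, Matrix.single_mul_single_same, one_mul]
  · rw [if_neg h, diagProj, diagProj, Matrix.single_mul_single_of_ne (h := fun hh : i = i' => h hh.symm)]

lemma sum_diagProj (k : ℕ) : ∑ i : Fin k, diagProj k i = 1 := by
  ext a b
  rw [Matrix.sum_apply]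
  have h1 : ∀ i : Fin k, diagProj k i a b
      = if i = a then (if a = b then (1:ℂ) else 0) else 0 := by
    intro i
    by_cases h : i = a <;> by_cases h' : a = b <;>
      simp [diagProj, Matrix.single, h, h'] <;> subst h <;> simp_all
  rw [Finset.sum_congr rfl (fun i _ => h1 i), Finset.sum_ite_eq' Finset.univ a]
  simp [Matrix.one_apply]

lemma perm_pow_adj {V : Type*} (G : SimpleGraph V) (g : Equiv.Perm V)
    (hg : ∀ a b, G.Adj (g a) (g b) ↔ G.Adj a b) (n : ℕ) :
    ∀ a b, G.Adj ((g ^ n) a) ((g ^ n) b) ↔ G.Adj a b := by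
  induction n with
  | zero => simp
  | succ n ih =>
    intro a b
    rw [pow_succ, Equiv.Perm.mul_apply, Equiv.Perm.mul_apply, ih, hg]

lemma perm_pow_fix {V : Type*} (g : Equiv.Perm V) {x : V} (h : g x = x) (n : ℕ) :
    (g ^ n) x = x := by
  induction n with
  | zero => rfl
  | succ n ih => rw [pow_succ, Equiv.Perm.mul_apply, h, ih]

lemma sum_proj_mul {k : ℕ} (f : Fin k → Matrix (Fin k) (Fin k) ℂ)
    (hf : ∀ i i', f i * f i' = if i' = i then f i else 0) (A B : Finset (Fin k)) :
    (∑ i ∈ A, f i) * (∑ i ∈ B, f i) = ∑ i ∈ A ∩ B, f i := by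
  rw [Finset.sum_mul_sum]
  have h1 : ∀ i ∈ A, ∑ j ∈ B, f i * f j = if i ∈ B then f i else 0 := by
    intro i _
    rw [Finset.sum_congr rfl (fun j _ => hf i j), Finset.sum_ite_eq' B i (fun _ => f i)]
  rw [Finset.sum_congr rfl h1, Finset.sum_ite_mem]

lemma sum_proj_herm {k : ℕ} (f : Fin k → Matrix (Fin k) (Fin k) ℂ)
    (hf : ∀ i, (f i).IsHermitian) (A : Finset (Fin k)) :
    (∑ i ∈ A, f i).IsHermitian := by
  rw [Matrix.IsHermitian, Matrix.conjTranspose_sum]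
  exact Finset.sum_congr rfl (fun i _ => hf i)

/-- given disjoint automorphisms `σ, τ` of a graph `G`, and
`k ≤ min(ord σ, ord τ)` (expressed by `σ^r ≠ 1, τ^r ≠ 1` for `0 < r < k`), the matrix
`u_{xy} = Σ_{r=1}^k δ_{x,σ^r y} p_r + Σ_{s=1}^k δ_{x,τ^s y} q_s − δ_{xy}·1` with values in
`M_k(ℂ)` is a quantum automorphism of `G` of dimension `k`: all entries are projections,
rows and columns sum (strongly) to `1` and are pairwise orthogonal, and `u` preserves the
adjacency relation (equivalently commutes with the adjacency matrix). -/
theorem stmt6 {V : Type*} [DecidableEq V] (G : SimpleGraph V) (k : ℕ) (hk : 0 < k)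
    (σ τ : Equiv.Perm V)
    (hσadj : ∀ x y, G.Adj (σ x) (σ y) ↔ G.Adj x y)
    (hτadj : ∀ x y, G.Adj (τ x) (τ y) ↔ G.Adj x y)
    (hdisj : ∀ x, (σ x ≠ x → τ x = x) ∧ (τ x ≠ x → σ x = x))
    (hordσ : ∀ r : ℕ, 0 < r → r < k → σ ^ r ≠ 1)
    (hordτ : ∀ r : ℕ, 0 < r → r < k → τ ^ r ≠ 1)
    (u : V → V → Matrix (Fin k) (Fin k) ℂ)
    (hu : ∀ x y, u x y =
      (∑ r : Fin k, if x = (σ ^ ((r : ℕ) + 1)) y then diagProj k r else 0) +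
      (∑ s : Fin k, if x = (τ ^ ((s : ℕ) + 1)) y then fourierProj k s else 0) -
      (if x = y then 1 else 0)) :
    (∀ x y, (u x y).IsHermitian ∧ u x y * u x y = u x y) ∧
    (∀ x z z', z ≠ z' → u x z * u x z' = 0) ∧
    (∀ y z z', z ≠ z' → u z y * u z' y = 0) ∧
    (∀ x, HasSum (fun y => u x y) 1) ∧
    (∀ y, HasSum (fun x => u x y) 1) ∧
    (∀ x₁ x₂ y₁ y₂, ¬((x₁ = x₂ ↔ y₁ = y₂) ∧ (G.Adj x₁ x₂ ↔ G.Adj y₁ y₂)) →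
      u x₁ y₁ * u x₂ y₂ = 0) := by
  classical
  -- the dichotomy: each entry is either a sum of diagonal projections or of Fourier projections
  have hdich : ∀ x y,
      (u x y = ∑ r ∈ Finset.univ.filter (fun r : Fin k => x = (σ ^ ((r : ℕ) + 1)) y),
          diagProj k r ∧ (x = y → τ x = x)) ∨
      (u x y = ∑ s ∈ Finset.univ.filter (fun s : Fin k => x = (τ ^ ((s : ℕ) + 1)) y),
          fourierProj k s ∧ (x = y → σ x = x)) := by
    intro x y
    by_cases hxy : x = y
    · subst hxy
      by_cases hτx : τ x = x
      · left
        refine ⟨?_, fun _ => hτx⟩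
        rw [hu, Finset.sum_filter]
        have hτs : ∀ s : Fin k,
            (if x = (τ ^ ((s : ℕ) + 1)) x then fourierProj k s else 0) = fourierProj k s :=
          fun s => if_pos (perm_pow_fix τ hτx ((s : ℕ) + 1)).symm
        rw [Finset.sum_congr rfl (fun s _ => hτs s), sum_fourierProj k hk, if_pos rfl,
          add_sub_cancel_right]
      · right
        have hσx : σ x = x := (hdisj x).2 hτx
        refine ⟨?_, fun _ => hσx⟩
        rw [hu, Finset.sum_filter]
        have hσs : ∀ r : Fin k,
            (if x = (σ ^ ((r : ℕ) + 1)) x then diagProj k r else 0) = diagProj k r :=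
          fun r => if_pos (perm_pow_fix σ hσx ((r : ℕ) + 1)).symm
        rw [Finset.sum_congr rfl (fun r _ => hσs r), sum_diagProj k, if_pos rfl,
          add_sub_cancel_left]
    · by_cases hSne : (Finset.univ.filter (fun r : Fin k => x = (σ ^ ((r : ℕ) + 1)) y)).Nonempty
      · left
        refine ⟨?_, fun h => absurd h hxy⟩
        obtain ⟨a, ha⟩ := hSne
        rw [Finset.mem_filter] at ha
        have ha2 : x = (σ ^ ((a : ℕ) + 1)) y := ha.2
        have hτy : τ y = y := by
          apply (hdisj y).1
          intro hc
          exact hxy (ha2.trans (perm_pow_fix σ hc _))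
        rw [hu, Finset.sum_filter]
        have hq0 : ∀ s : Fin k,
            (if x = (τ ^ ((s : ℕ) + 1)) y then fourierProj k s else 0) = 0 := by
          intro s
          rw [if_neg]
          intro hc
          exact hxy (hc.trans (perm_pow_fix τ hτy _))
        rw [Finset.sum_congr rfl (fun s _ => hq0 s), Finset.sum_const_zero, if_neg hxy,
          add_zero, sub_zero]
      · right
        refine ⟨?_, fun h => absurd h hxy⟩
        rw [hu, Finset.sum_filter]
        have hp0 : ∀ r : Fin k,
            (if x = (σ ^ ((r : ℕ) + 1)) y then diagProj k r else 0) = 0 := by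
          intro r
          rw [if_neg]
          intro hc
          exact hSne ⟨r, Finset.mem_filter.mpr ⟨Finset.mem_univ r, hc⟩⟩
        rw [Finset.sum_congr rfl (fun r _ => hp0 r), Finset.sum_const_zero, if_neg hxy,
          zero_add, sub_zero]
  -- the master product lemma
  have hkey : ∀ x₁ x₂ y₁ y₂, ¬((x₁ = x₂ ↔ y₁ = y₂) ∧ (G.Adj x₁ x₂ ↔ G.Adj y₁ y₂)) →
      u x₁ y₁ * u x₂ y₂ = 0 := by
    intro x₁ x₂ y₁ y₂ hrel
    have hcontra : ∀ g : Equiv.Perm V, (∀ a b, G.Adj (g a) (g b) ↔ G.Adj a b) →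
        g y₁ = x₁ → g y₂ = x₂ → False := by
      intro g hg h1 h2
      apply hrel
      constructor
      · rw [← h1, ← h2, Equiv.apply_eq_iff_eq]
      · rw [← h1, ← h2, hg]
    rcases hdich x₁ y₁ with ⟨h1, h1'⟩ | ⟨h1, h1'⟩ <;>
      rcases hdich x₂ y₂ with ⟨h2, h2'⟩ | ⟨h2, h2'⟩
    · -- diag / diag
      rw [h1, h2, sum_proj_mul _ (diagProj_mul k) _ _]
      have hempty : (Finset.univ.filter (fun r : Fin k => x₁ = (σ ^ ((r : ℕ) + 1)) y₁)) ∩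
          (Finset.univ.filter (fun r : Fin k => x₂ = (σ ^ ((r : ℕ) + 1)) y₂)) = ∅ := by
        rw [Finset.eq_empty_iff_forall_notMem]
        intro r hr
        rw [Finset.mem_inter, Finset.mem_filter, Finset.mem_filter] at hr
        exact hcontra (σ ^ ((r : ℕ) + 1)) (perm_pow_adj G σ hσadj _) hr.1.2.symm hr.2.2.symm
      rw [hempty, Finset.sum_empty]
    · -- diag / fourier
      by_cases hS1 : (Finset.univ.filter (fun r : Fin k => x₁ = (σ ^ ((r : ℕ) + 1)) y₁)).Nonempty
      · by_cases hT2 : (Finset.univ.filter (fun s : Fin k => x₂ = (τ ^ ((s : ℕ) + 1)) y₂)).Nonempty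
        · exfalso
          obtain ⟨a, ha⟩ := hS1
          obtain ⟨b, hb⟩ := hT2
          rw [Finset.mem_filter] at ha hb
          have ha2 : x₁ = (σ ^ ((a : ℕ) + 1)) y₁ := ha.2
          have hb2 : x₂ = (τ ^ ((b : ℕ) + 1)) y₂ := hb.2
          have hτy₁ : τ y₁ = y₁ := by
            by_cases h : x₁ = y₁
            · rw [← h]; exact h1' h
            · apply (hdisj y₁).1
              intro hc
              exact h (ha2.trans (perm_pow_fix σ hc _))
          have hσx₂ : σ x₂ = x₂ := by
            by_cases h : x₂ = y₂
            · exact h2' h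
            · apply (hdisj x₂).2
              intro hc
              apply h
              exact Equiv.injective _ ((perm_pow_fix τ hc ((b : ℕ) + 1)).trans hb2)
          apply hcontra ((τ ^ ((b : ℕ) + 1)).trans (σ ^ ((a : ℕ) + 1)))
          · intro p q
            simp only [Equiv.trans_apply]
            rw [perm_pow_adj G σ hσadj, perm_pow_adj G τ hτadj]
          · simp only [Equiv.trans_apply]
            rw [perm_pow_fix τ hτy₁, ← ha2]
          · simp only [Equiv.trans_apply]
            rw [← hb2, perm_pow_fix σ hσx₂]
        · rw [h2, Finset.not_nonempty_iff_eq_empty.mp hT2, Finset.sum_empty, mul_zero]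
      · rw [h1, Finset.not_nonempty_iff_eq_empty.mp hS1, Finset.sum_empty, zero_mul]
    · -- fourier / diag
      by_cases hT1 : (Finset.univ.filter (fun s : Fin k => x₁ = (τ ^ ((s : ℕ) + 1)) y₁)).Nonempty
      · by_cases hS2 : (Finset.univ.filter (fun r : Fin k => x₂ = (σ ^ ((r : ℕ) + 1)) y₂)).Nonempty
        · exfalso
          obtain ⟨b, hb⟩ := hT1
          obtain ⟨a, ha⟩ := hS2
          rw [Finset.mem_filter] at ha hb
          have hb2 : x₁ = (τ ^ ((b : ℕ) + 1)) y₁ := hb.2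
          have ha2 : x₂ = (σ ^ ((a : ℕ) + 1)) y₂ := ha.2
          have hσy₁ : σ y₁ = y₁ := by
            by_cases h : x₁ = y₁
            · rw [← h]; exact h1' h
            · apply (hdisj y₁).2
              intro hc
              exact h (hb2.trans (perm_pow_fix τ hc _))
          have hτx₂ : τ x₂ = x₂ := by
            by_cases h : x₂ = y₂
            · exact h2' h
            · apply (hdisj x₂).1
              intro hc
              apply h
              exact Equiv.injective _ ((perm_pow_fix σ hc ((a : ℕ) + 1)).trans ha2)
          apply hcontra ((σ ^ ((a : ℕ) + 1)).trans (τ ^ ((b : ℕ) + 1)))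
          · intro p q
            simp only [Equiv.trans_apply]
            rw [perm_pow_adj G τ hτadj, perm_pow_adj G σ hσadj]
          · simp only [Equiv.trans_apply]
            rw [perm_pow_fix σ hσy₁, ← hb2]
          · simp only [Equiv.trans_apply]
            rw [← ha2, perm_pow_fix τ hτx₂]
        · rw [h2, Finset.not_nonempty_iff_eq_empty.mp hS2, Finset.sum_empty, mul_zero]
      · rw [h1, Finset.not_nonempty_iff_eq_empty.mp hT1, Finset.sum_empty, zero_mul]
    · -- fourier / fourier
      rw [h1, h2, sum_proj_mul _ (fourierProj_mul k hk) _ _]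
      have hempty : (Finset.univ.filter (fun s : Fin k => x₁ = (τ ^ ((s : ℕ) + 1)) y₁)) ∩
          (Finset.univ.filter (fun s : Fin k => x₂ = (τ ^ ((s : ℕ) + 1)) y₂)) = ∅ := by
        rw [Finset.eq_empty_iff_forall_notMem]
        intro s hs
        rw [Finset.mem_inter, Finset.mem_filter, Finset.mem_filter] at hs
        exact hcontra (τ ^ ((s : ℕ) + 1)) (perm_pow_adj G τ hτadj _) hs.1.2.symm hs.2.2.symm
      rw [hempty, Finset.sum_empty]
  refine ⟨?_, ?_, ?_, ?_, ?_, hkey⟩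
  · -- hermitian and idempotent
    intro x y
    rcases hdich x y with ⟨h, -⟩ | ⟨h, -⟩
    · rw [h]
      exact ⟨sum_proj_herm _ (diagProj_herm k) _,
        by rw [sum_proj_mul _ (diagProj_mul k) _ _, Finset.inter_self]⟩
    · rw [h]
      exact ⟨sum_proj_herm _ (fourierProj_herm k) _,
        by rw [sum_proj_mul _ (fourierProj_mul k hk) _ _, Finset.inter_self]⟩
  · -- row orthogonality
    intro x z z' hzz'
    exact hkey x x z z' (fun h => hzz' (h.1.mp rfl))
  · -- column orthogonality
    intro y z z' hzz'
    exact hkey z z' y y (fun h => hzz' (h.1.mpr rfl))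
  · -- row sums
    intro x
    set F : Finset V := (({x} : Finset V) ∪
        Finset.image (fun r : Fin k => ((σ ^ ((r : ℕ) + 1))⁻¹ : Equiv.Perm V) x) Finset.univ) ∪
        Finset.image (fun s : Fin k => ((τ ^ ((s : ℕ) + 1))⁻¹ : Equiv.Perm V) x) Finset.univ
      with hF
    have hmemx : x ∈ F := Finset.mem_union_left _
      (Finset.mem_union_left _ (Finset.mem_singleton_self x))
    have hmem1 : ∀ r : Fin k, ((σ ^ ((r : ℕ) + 1))⁻¹ : Equiv.Perm V) x ∈ F := fun r =>
      Finset.mem_union_left _ (Finset.mem_union_right _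
        (Finset.mem_image_of_mem _ (Finset.mem_univ r)))
    have hmem2 : ∀ s : Fin k, ((τ ^ ((s : ℕ) + 1))⁻¹ : Equiv.Perm V) x ∈ F := fun s =>
      Finset.mem_union_right _ (Finset.mem_image_of_mem _ (Finset.mem_univ s))
    have hvan : ∀ y ∉ F, u x y = 0 := by
      intro y hy
      rw [hu]
      have hxy : ¬ x = y := by
        intro h
        exact hy (h ▸ hmemx)
      have hp0 : ∀ r : Fin k, (if x = (σ ^ ((r : ℕ) + 1)) y then diagProj k r else 0) = 0 := by
        intro r
        rw [if_neg]
        intro hc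
        apply hy
        have : y = ((σ ^ ((r : ℕ) + 1))⁻¹ : Equiv.Perm V) x := by rw [hc]; simp
        rw [this]; exact hmem1 r
      have hq0 : ∀ s : Fin k, (if x = (τ ^ ((s : ℕ) + 1)) y then fourierProj k s else 0) = 0 := by
        intro s
        rw [if_neg]
        intro hc
        apply hy
        have : y = ((τ ^ ((s : ℕ) + 1))⁻¹ : Equiv.Perm V) x := by rw [hc]; simp
        rw [this]; exact hmem2 s
      rw [Finset.sum_congr rfl (fun r _ => hp0 r), Finset.sum_congr rfl (fun s _ => hq0 s),
        Finset.sum_const_zero, if_neg hxy, add_zero, sub_zero]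
    have hsum : ∑ y ∈ F, u x y = 1 := by
      rw [Finset.sum_congr rfl (fun y _ => hu x y)]
      rw [Finset.sum_sub_distrib, Finset.sum_add_distrib]
      have hp1 : ∑ y ∈ F, ∑ r : Fin k, (if x = (σ ^ ((r : ℕ) + 1)) y then diagProj k r else 0)
          = 1 := by
        rw [Finset.sum_comm]
        have hinner : ∀ r : Fin k,
            ∑ y ∈ F, (if x = (σ ^ ((r : ℕ) + 1)) y then diagProj k r else 0) = diagProj k r := by
          intro r
          have hiff : ∀ y : V, (if x = (σ ^ ((r : ℕ) + 1)) y then diagProj k r else 0)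
              = (if y = ((σ ^ ((r : ℕ) + 1))⁻¹ : Equiv.Perm V) x then diagProj k r else 0) := by
            intro y
            by_cases h : x = (σ ^ ((r : ℕ) + 1)) y
            · rw [if_pos h, if_pos (by rw [h]; simp)]
            · rw [if_neg h, if_neg (fun hc => h (by rw [hc]; simp))]
          rw [Finset.sum_congr rfl (fun y _ => hiff y),
            Finset.sum_ite_eq' F _ (fun _ => diagProj k r), if_pos (hmem1 r)]
        rw [Finset.sum_congr rfl (fun r _ => hinner r), sum_diagProj k]
      have hq1 : ∑ y ∈ F, ∑ s : Fin k, (if x = (τ ^ ((s : ℕ) + 1)) y then fourierProj k s else 0)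
          = 1 := by
        rw [Finset.sum_comm]
        have hinner : ∀ s : Fin k,
            ∑ y ∈ F, (if x = (τ ^ ((s : ℕ) + 1)) y then fourierProj k s else 0)
              = fourierProj k s := by
          intro s
          have hiff : ∀ y : V, (if x = (τ ^ ((s : ℕ) + 1)) y then fourierProj k s else 0)
              = (if y = ((τ ^ ((s : ℕ) + 1))⁻¹ : Equiv.Perm V) x then fourierProj k s else 0) := by
            intro y
            by_cases h : x = (τ ^ ((s : ℕ) + 1)) y
            · rw [if_pos h, if_pos (by rw [h]; simp)]
            · rw [if_neg h, if_neg (fun hc => h (by rw [hc]; simp))]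
          rw [Finset.sum_congr rfl (fun y _ => hiff y),
            Finset.sum_ite_eq' F _ (fun _ => fourierProj k s), if_pos (hmem2 s)]
        rw [Finset.sum_congr rfl (fun s _ => hinner s), sum_fourierProj k hk]
      have hd1 : ∑ y ∈ F, (if x = y then (1 : Matrix (Fin k) (Fin k) ℂ) else 0) = 1 := by
        have hiff : ∀ y : V, (if x = y then (1 : Matrix (Fin k) (Fin k) ℂ) else 0)
            = (if y = x then (1 : Matrix (Fin k) (Fin k) ℂ) else 0) := by
          intro y
          by_cases h : x = y
          · rw [if_pos h, if_pos h.symm]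
          · rw [if_neg h, if_neg (fun hc => h hc.symm)]
        rw [Finset.sum_congr rfl (fun y _ => hiff y),
          Finset.sum_ite_eq' F x (fun _ => (1 : Matrix (Fin k) (Fin k) ℂ)), if_pos hmemx]
      rw [hp1, hq1, hd1, add_sub_cancel_right]
    exact hsum ▸ hasSum_sum_of_ne_finset_zero hvan
  · -- column sums
    intro y
    set F : Finset V := (({y} : Finset V) ∪
        Finset.image (fun r : Fin k => (σ ^ ((r : ℕ) + 1)) y) Finset.univ) ∪
        Finset.image (fun s : Fin k => (τ ^ ((s : ℕ) + 1)) y) Finset.univ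
      with hF
    have hmemy : y ∈ F := Finset.mem_union_left _
      (Finset.mem_union_left _ (Finset.mem_singleton_self y))
    have hmem1 : ∀ r : Fin k, (σ ^ ((r : ℕ) + 1)) y ∈ F := fun r =>
      Finset.mem_union_left _ (Finset.mem_union_right _
        (Finset.mem_image_of_mem _ (Finset.mem_univ r)))
    have hmem2 : ∀ s : Fin k, (τ ^ ((s : ℕ) + 1)) y ∈ F := fun s =>
      Finset.mem_union_right _ (Finset.mem_image_of_mem _ (Finset.mem_univ s))
    have hvan : ∀ x ∉ F, u x y = 0 := by
      intro x hx
      rw [hu]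
      have hxy : ¬ x = y := fun h => hx (h ▸ hmemy)
      have hp0 : ∀ r : Fin k, (if x = (σ ^ ((r : ℕ) + 1)) y then diagProj k r else 0) = 0 := by
        intro r
        rw [if_neg]
        intro hc
        exact hx (hc ▸ hmem1 r)
      have hq0 : ∀ s : Fin k, (if x = (τ ^ ((s : ℕ) + 1)) y then fourierProj k s else 0) = 0 := by
        intro s
        rw [if_neg]
        intro hc
        exact hx (hc ▸ hmem2 s)
      rw [Finset.sum_congr rfl (fun r _ => hp0 r), Finset.sum_congr rfl (fun s _ => hq0 s),
        Finset.sum_const_zero, if_neg hxy, add_zero, sub_zero]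
    have hsum : ∑ x ∈ F, u x y = 1 := by
      rw [Finset.sum_congr rfl (fun x _ => hu x y)]
      rw [Finset.sum_sub_distrib, Finset.sum_add_distrib]
      have hp1 : ∑ x ∈ F, ∑ r : Fin k, (if x = (σ ^ ((r : ℕ) + 1)) y then diagProj k r else 0)
          = 1 := by
        rw [Finset.sum_comm]
        have hinner : ∀ r : Fin k,
            ∑ x ∈ F, (if x = (σ ^ ((r : ℕ) + 1)) y then diagProj k r else 0) = diagProj k r := by
          intro r
          rw [Finset.sum_ite_eq' F _ (fun _ => diagProj k r), if_pos (hmem1 r)]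
        rw [Finset.sum_congr rfl (fun r _ => hinner r), sum_diagProj k]
      have hq1 : ∑ x ∈ F, ∑ s : Fin k, (if x = (τ ^ ((s : ℕ) + 1)) y then fourierProj k s else 0)
          = 1 := by
        rw [Finset.sum_comm]
        have hinner : ∀ s : Fin k,
            ∑ x ∈ F, (if x = (τ ^ ((s : ℕ) + 1)) y then fourierProj k s else 0)
              = fourierProj k s := by
          intro s
          rw [Finset.sum_ite_eq' F _ (fun _ => fourierProj k s), if_pos (hmem2 s)]
        rw [Finset.sum_congr rfl (fun s _ => hinner s), sum_fourierProj k hk]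
      have hd1 : ∑ x ∈ F, (if x = y then (1 : Matrix (Fin k) (Fin k) ℂ) else 0) = 1 := by
        rw [Finset.sum_ite_eq' F y (fun _ => (1 : Matrix (Fin k) (Fin k) ℂ)), if_pos hmemy]
      rw [hp1, hq1, hd1, add_sub_cancel_right]
    exact hsum ▸ hasSum_sum_of_ne_finset_zero hvan
end
end

section
/- Let g, h ∈ SO(3) and define π_g(v_{ij}) = g_{ij} t_i ⊗ t_j ∈ M_4(C) and the tensor product representation (π_g ⊠ π_h)(v_{ij}) = Σ_{k=1}^{3} g_{ik} h_{kj} t_i ⊗ t_k ⊗ t_k ⊗ t_j on C^4 ⊗ C^4. Let p_0, p_1, p_2, p_3 be the four rank-one projections on C^4 decomposing π_e (the representation at the identity e ∈ SO(3)) into the characters corresponding to the Klein group elements d_0 = 1, d_1, d_2, d_3 ∈ SO(3). Then for each m the operator 1 ⊗ p_m ⊗ 1 commutes with all (π_g ⊠ π_h)(v_{ij}), and the restriction of π_g ⊠ π_h to the range of 1 ⊗ p_m ⊗ 1 is unitarily equivalent to π_{g d_m h}. Consequently π_g ⊠ π_h ≅ ⊕_{d∈D} π_{g d h}. -/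
noncomputable section

open Matrix
open scoped Kronecker

def pauli : Fin 3 → Matrix (Fin 2) (Fin 2) ℂ
  | 0 => !![Complex.I, 0; 0, -Complex.I]
  | 1 => !![0, 1; -1, 0]
  | 2 => !![0, -Complex.I; -Complex.I, 0]

def piRep (g : Matrix (Fin 3) (Fin 3) ℝ) (i j : Fin 3) :
    Matrix (Fin 2 × Fin 2) (Fin 2 × Fin 2) ℂ :=
  ((g i j : ℝ) : ℂ) • (pauli i ⊗ₖ pauli j)

/-- The Klein four-group `D = {d_0 = 1, d_1, d_2, d_3} ⊂ SO(3)` of diagonal orthogonal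
matrices of determinant `1`. -/
def kleinGroup (m : Fin 4) : Matrix (Fin 3) (Fin 3) ℝ :=
  Matrix.diagonal fun j => if (m : ℕ) = 0 ∨ (j : ℕ) + 1 = (m : ℕ) then 1 else -1

/-- The tensor product representation
`(π_g ⊠ π_h)(v_{ij}) = Σ_k g_{ik} h_{kj} t_i ⊗ (t_k ⊗ t_k) ⊗ t_j` on `ℂ⁴ ⊗ ℂ⁴`. -/
def tensorRep (g h : Matrix (Fin 3) (Fin 3) ℝ) (i j : Fin 3) :
    Matrix ((Fin 2 × (Fin 2 × Fin 2)) × Fin 2) ((Fin 2 × (Fin 2 × Fin 2)) × Fin 2) ℂ :=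
  ∑ k : Fin 3, ((g i k * h k j : ℝ) : ℂ) • (pauli i ⊗ₖ (pauli k ⊗ₖ pauli k) ⊗ₖ pauli j)

def sC : ℂ := ((Real.sqrt 2)⁻¹ : ℝ)

lemma sC_mul_sC : sC * sC = 2⁻¹ := by
  unfold sC
  rw [← Complex.ofReal_mul, ← Real.sqrt_inv, Real.mul_self_sqrt (by norm_num)]
  norm_num

lemma star_sC : star sC = sC := by
  simp [sC, Complex.star_def, Complex.conj_ofReal]

def wvec (m : Fin 4) (c : Fin 2 × Fin 2) : ℂ :=
  (![!![0, sC; -sC, 0], !![0, sC; sC, 0], !![sC, 0; 0, sC], !![sC, 0; 0, -sC]] m) c.1 c.2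

def pexp (m : Fin 4) : Matrix (Fin 2 × Fin 2) (Fin 2 × Fin 2) ℂ :=
  Matrix.of fun c d => wvec m c * star (wvec m d)

def qmat (m : Fin 4) : Matrix (Fin 2 × Fin 2) (Fin 2 × Fin 2) ℂ :=
  (4⁻¹ : ℂ) • ((1 : Matrix (Fin 2 × Fin 2) (Fin 2 × Fin 2) ℂ)
    + ∑ k : Fin 3, ((kleinGroup m k k : ℝ) : ℂ) • (pauli k ⊗ₖ pauli k))

lemma conj_sC : (starRingEnd ℂ) sC = sC := Complex.conj_ofReal _

set_option maxHeartbeats 1000000 in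
lemma qmat_eq_pexp (m : Fin 4) : qmat m = pexp m := by
  fin_cases m <;>
  · ext ⟨a, b⟩ ⟨c, d⟩
    fin_cases a <;> fin_cases b <;> fin_cases c <;> fin_cases d <;>
      norm_num [qmat, pexp, wvec, kleinGroup, pauli, Fin.sum_univ_three, Matrix.one_apply,
        Matrix.smul_apply, Matrix.add_apply, Matrix.sum_apply, kroneckerMap_apply,
        conj_sC, sC_mul_sC, Matrix.diagonal_apply, Prod.ext_iff, (by decide : (2 : Fin 3) ≠ 0), (by decide : (1 : Fin 3) ≠ 0), (by decide : (2 : Fin 3) ≠ 1)]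

def Wmat (v : Fin 2 × Fin 2 → ℂ) :
    Matrix ((Fin 2 × (Fin 2 × Fin 2)) × Fin 2) (Fin 2 × Fin 2) ℂ :=
  Matrix.of fun x y => (if x.1.1 = y.1 then v x.1.2 else 0) * (if x.2 = y.2 then 1 else 0)

lemma kron_mul_Wmat (A : Matrix (Fin 2) (Fin 2) ℂ) (B : Matrix (Fin 2 × Fin 2) (Fin 2 × Fin 2) ℂ)
    (C : Matrix (Fin 2) (Fin 2) ℂ) (v : Fin 2 × Fin 2 → ℂ) :
    (A ⊗ₖ B ⊗ₖ C) * Wmat v =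
      Matrix.of fun x y => A x.1.1 y.1 * B.mulVec v x.1.2 * C x.2 y.2 := by
  ext x y
  simp only [Matrix.mul_apply, Wmat, Matrix.of_apply, Matrix.kroneckerMap_apply,
    Fintype.sum_prod_type, Matrix.mulVec, dotProduct, mul_ite, ite_mul,
    mul_zero, zero_mul, mul_one, Finset.sum_ite_eq', Finset.mem_univ, if_true]
  rw [Finset.sum_comm]
  simp [Finset.mul_sum, Finset.sum_mul]
  ring_nf

lemma Wmat_mul_kron (A : Matrix (Fin 2) (Fin 2) ℂ) (C : Matrix (Fin 2) (Fin 2) ℂ)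
    (v : Fin 2 × Fin 2 → ℂ) :
    Wmat v * (A ⊗ₖ C) = Matrix.of fun x y => A x.1.1 y.1 * v x.1.2 * C x.2 y.2 := by
  ext x y
  simp only [Matrix.mul_apply, Wmat, Matrix.of_apply, Matrix.kroneckerMap_apply,
    Fintype.sum_prod_type, mul_ite, ite_mul, mul_zero, zero_mul, mul_one, one_mul,
    Finset.sum_ite_eq', Finset.sum_ite_eq, Finset.mem_univ, if_true]
  ring

lemma Wmat_conjT_mul (v : Fin 2 × Fin 2 → ℂ) :
    (Wmat v)ᴴ * Wmat v = (∑ c, star (v c) * v c) • 1 := by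
  ext y y'
  simp only [Matrix.mul_apply, Wmat, Matrix.conjTranspose_apply, Matrix.of_apply,
    Fintype.sum_prod_type, star_mul', apply_ite (star : ℂ → ℂ), star_zero, star_one, mul_ite, ite_mul,
    mul_zero, zero_mul, mul_one, one_mul, Finset.sum_ite_eq', Finset.sum_ite_eq,
    Finset.mem_univ, if_true, Matrix.smul_apply, Matrix.one_apply, smul_eq_mul]
  by_cases h1 : y = y' <;> simp [h1, Prod.ext_iff] <;> aesop

lemma Wmat_mul_conjT (v : Fin 2 × Fin 2 → ℂ) :
    Wmat v * (Wmat v)ᴴ =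
      (1 : Matrix (Fin 2) (Fin 2) ℂ) ⊗ₖ (Matrix.of fun c d => v c * star (v d)) ⊗ₖ
        (1 : Matrix (Fin 2) (Fin 2) ℂ) := by
  ext x x'
  simp only [Matrix.mul_apply, Wmat, Matrix.conjTranspose_apply, Matrix.of_apply,
    Fintype.sum_prod_type, star_mul', apply_ite (star : ℂ → ℂ), star_zero, star_one, mul_ite, ite_mul,
    mul_zero, zero_mul, mul_one, one_mul, Finset.sum_ite_eq', Finset.sum_ite_eq,
    Finset.mem_univ, if_true, Matrix.kroneckerMap_apply, Matrix.one_apply]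

set_option maxHeartbeats 1000000 in
lemma pauli_kron_mulVec (m : Fin 4) (k : Fin 3) :
    (pauli k ⊗ₖ pauli k).mulVec (wvec m) = fun c => ((kleinGroup m k k : ℝ) : ℂ) * wvec m c := by
  fin_cases m <;> fin_cases k <;>
  · funext c
    fin_cases c <;>
      norm_num [Matrix.mulVec, dotProduct, Fintype.sum_prod_type, Fin.sum_univ_two,
        wvec, pauli, kroneckerMap_apply, kleinGroup, Matrix.diagonal_apply, Complex.I_mul_I]

lemma wvec_norm (m : Fin 4) : ∑ c, star (wvec m c) * wvec m c = 1 := by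
  fin_cases m <;>
    norm_num [Fintype.sum_prod_type, Fin.sum_univ_two, wvec, Complex.star_def,
      conj_sC, sC_mul_sC]

lemma kron_mul_pexp (m : Fin 4) (k : Fin 3) :
    (pauli k ⊗ₖ pauli k) * pexp m = ((kleinGroup m k k : ℝ) : ℂ) • pexp m := by
  ext c d
  have h := congrFun (pauli_kron_mulVec m k) c
  simp only [Matrix.mulVec, dotProduct] at h
  simp only [Matrix.mul_apply, pexp, Matrix.of_apply, Matrix.smul_apply, smul_eq_mul]
  calc ∑ e, (pauli k ⊗ₖ pauli k) c e * (wvec m e * star (wvec m d))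
      = (∑ e, (pauli k ⊗ₖ pauli k) c e * wvec m e) * star (wvec m d) := by
        rw [Finset.sum_mul]; exact Finset.sum_congr rfl fun e _ => by ring
    _ = (((kleinGroup m k k : ℝ) : ℂ) * wvec m c) * star (wvec m d) := by rw [h]
    _ = ((kleinGroup m k k : ℝ) : ℂ) * (wvec m c * star (wvec m d)) := by ring

lemma pexp_herm (m : Fin 4) : (pexp m)ᴴ = pexp m := by
  ext c d
  simp [pexp, Matrix.conjTranspose_apply, star_mul']
  ring

set_option maxHeartbeats 1000000 in
lemma pauliK_herm (k : Fin 3) : (pauli k ⊗ₖ pauli k)ᴴ = pauli k ⊗ₖ pauli k := by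
  fin_cases k <;>
  · ext ⟨a, b⟩ ⟨c, d⟩
    fin_cases a <;> fin_cases b <;> fin_cases c <;> fin_cases d <;>
      simp [pauli, kroneckerMap_apply, Matrix.conjTranspose_apply]

lemma pexp_mul_kron (m : Fin 4) (k : Fin 3) :
    pexp m * (pauli k ⊗ₖ pauli k) = ((kleinGroup m k k : ℝ) : ℂ) • pexp m := by
  have h := congrArg Matrix.conjTranspose (kron_mul_pexp m k)
  rw [Matrix.conjTranspose_mul, pexp_herm, pauliK_herm, Matrix.conjTranspose_smul,
    pexp_herm] at h
  rw [h]
  congr 1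
  simp [Complex.star_def, Complex.conj_ofReal]

lemma klein_orth (m n : Fin 4) :
    (4⁻¹ : ℂ) * (1 + ∑ k : Fin 3,
      ((kleinGroup m k k : ℝ) : ℂ) * ((kleinGroup n k k : ℝ) : ℂ)) =
    if m = n then 1 else 0 := by
  fin_cases m <;> fin_cases n <;>
    simp [kleinGroup, Fin.sum_univ_three, Matrix.diagonal_apply] <;> norm_num

/-- let `p_0, …, p_3` be the four rank-one projections decomposing `π_e` into
the characters given by the Klein group (`π_e(v_{ij}) p_m = (d_m)_{ij} p_m`, `Σ p_m = 1`).
Then each `1 ⊗ p_m ⊗ 1` commutes with all `(π_g ⊠ π_h)(v_{ij})`, and the restriction of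
`π_g ⊠ π_h` to the range of `1 ⊗ p_m ⊗ 1` is unitarily equivalent to `π_{g d_m h}`
(witnessed by an isometry `W`).  Consequently `π_g ⊠ π_h ≅ ⊕_{d ∈ D} π_{g d h}`. -/
theorem stmt9 (g h : Matrix (Fin 3) (Fin 3) ℝ)
    (hg : g * gᵀ = 1) (hgdet : g.det = 1) (hh : h * hᵀ = 1) (hhdet : h.det = 1)
    (p : Fin 4 → Matrix (Fin 2 × Fin 2) (Fin 2 × Fin 2) ℂ)
    (hherm : ∀ m, (p m).IsHermitian) (hidem : ∀ m, p m * p m = p m)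
    (hrank : ∀ m, (p m).trace = 1) (hsum : ∑ m : Fin 4, p m = 1)
    (hchar : ∀ m i j, piRep 1 i j * p m = ((kleinGroup m i j : ℝ) : ℂ) • p m) :
    (∀ (m : Fin 4) (i j : Fin 3),
      Commute ((1 : Matrix (Fin 2) (Fin 2) ℂ) ⊗ₖ p m ⊗ₖ (1 : Matrix (Fin 2) (Fin 2) ℂ))
        (tensorRep g h i j)) ∧
    (∀ m : Fin 4, ∃ W : Matrix ((Fin 2 × (Fin 2 × Fin 2)) × Fin 2) (Fin 2 × Fin 2) ℂ,
      Wᴴ * W = 1 ∧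
      W * Wᴴ = (1 : Matrix (Fin 2) (Fin 2) ℂ) ⊗ₖ p m ⊗ₖ (1 : Matrix (Fin 2) (Fin 2) ℂ) ∧
      ∀ i j : Fin 3, tensorRep g h i j * W = W * piRep (g * kleinGroup m * h) i j) := by
  -- Step 1: `A_k p_m = ε p_m` from `hchar`
  have hA : ∀ (m : Fin 4) (k : Fin 3),
      (pauli k ⊗ₖ pauli k) * p m = ((kleinGroup m k k : ℝ) : ℂ) • p m := by
    intro m k
    have := hchar m k k
    simpa [piRep, Matrix.one_apply_eq] using this
  -- Step 2: `p m` equals the explicit rank-one projection `pexp m`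
  have hqpn : ∀ m n : Fin 4, qmat m * p n = (if m = n then (1 : ℂ) else 0) • p n := by
    intro m n
    rw [qmat, smul_mul_assoc, add_mul, one_mul, Finset.sum_mul]
    simp only [smul_mul_assoc, hA n, smul_smul]
    rw [← klein_orth m n, ← Finset.sum_smul, mul_smul, add_smul, one_smul]
  have hp : ∀ m, p m = pexp m := by
    intro m
    rw [← qmat_eq_pexp]
    calc p m = ∑ n, (if m = n then (1 : ℂ) else 0) • p n := by
          simp [ite_smul]
      _ = ∑ n, qmat m * p n := by simp [hqpn]
      _ = qmat m := by rw [← Finset.mul_sum, hsum, mul_one]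
  have hcomm : ∀ (m : Fin 4) (k : Fin 3),
      p m * (pauli k ⊗ₖ pauli k) = (pauli k ⊗ₖ pauli k) * p m := by
    intro m k
    rw [hp, pexp_mul_kron, kron_mul_pexp]
  constructor
  · -- commutation
    intro m i j
    show _ * _ = _ * _
    rw [tensorRep, Finset.mul_sum, Finset.sum_mul]
    refine Finset.sum_congr rfl fun k _ => ?_
    rw [mul_smul_comm, smul_mul_assoc]
    congr 1
    rw [← Matrix.mul_kronecker_mul, ← Matrix.mul_kronecker_mul,
      ← Matrix.mul_kronecker_mul, ← Matrix.mul_kronecker_mul,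
      hcomm m k, one_mul, mul_one, one_mul, mul_one]
  · intro m
    refine ⟨Wmat (wvec m), ?_, ?_, ?_⟩
    · rw [Wmat_conjT_mul, wvec_norm, one_smul]
    · rw [Wmat_mul_conjT, hp m]
      rfl
    · intro i j
      have hscal : (g * kleinGroup m * h) i j =
          ∑ k : Fin 3, g i k * h k j * kleinGroup m k k := by
        rw [Matrix.mul_apply]
        refine Finset.sum_congr rfl fun k _ => ?_
        simp only [kleinGroup, Matrix.mul_diagonal, Matrix.diagonal_apply_eq]
        ring
      have step : ∀ k : Fin 3,
          (pauli i ⊗ₖ (pauli k ⊗ₖ pauli k) ⊗ₖ pauli j) * Wmat (wvec m) =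
          ((kleinGroup m k k : ℝ) : ℂ) • (Wmat (wvec m) * (pauli i ⊗ₖ pauli j)) := by
        intro k
        rw [kron_mul_Wmat, Wmat_mul_kron, pauli_kron_mulVec]
        ext x y
        simp only [Matrix.smul_apply, Matrix.of_apply, smul_eq_mul]
        ring
      rw [tensorRep, piRep, Matrix.mul_smul]
      rw [Matrix.sum_mul]
      calc ∑ k : Fin 3, ((g i k * h k j : ℝ) : ℂ) •
            (pauli i ⊗ₖ (pauli k ⊗ₖ pauli k) ⊗ₖ pauli j) * Wmat (wvec m)
          = ∑ k : Fin 3, (((g i k * h k j * kleinGroup m k k : ℝ)) : ℂ) •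
              (Wmat (wvec m) * (pauli i ⊗ₖ pauli j)) := by
            refine Finset.sum_congr rfl fun k _ => ?_
            rw [Matrix.smul_mul, step k, smul_smul]
            push_cast
            ring_nf
        _ = (((g * kleinGroup m * h) i j : ℝ) : ℂ) •
              (Wmat (wvec m) * (pauli i ⊗ₖ pauli j)) := by
            rw [← Finset.sum_smul, hscal]
            push_cast
            ring_nf
end
end

section
/- Let g, h ∈ SO(3) and suppose the representations π_g and π_h of the C*-algebra C(SO_{−1}(3)) (with π_g(v_{ij}) = g_{ij} t_i ⊗ t_j) admit a common irreducible subrepresentation. Then |g_{ij}| = |h_{ij}| for all i,j, and consequently there exist c, d in the Klein group D ⊂ SO(3) with g = c h d. -/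
noncomputable section

open Matrix
open scoped Kronecker

lemma core22 (a0 a1 a2 b0 b1 b2 A0 A1 A2 B0 B1 B2 : ℝ)
    (sg : a0*b0 + a1*b1 + a2*b2 = 0) (sh : A0*B0 + A1*B1 + A2*B2 = 0)
    (q0 : a0^2 = A0^2) (q1 : a1^2 = A1^2) (q2 : a2^2 = A2^2)
    (r0 : b0^2 = B0^2) (r1 : b1^2 = B1^2) (r2 : b2^2 = B2^2) :
    a0*a1*b0*b1 = A0*A1*B0*B1 := by
  linear_combination (1/2) * ((a0*b0+a1*b1-a2*b2) * sg - (A0*B0+A1*B1-A2*B2) * sh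
    - b0^2*q0 - A0^2*r0 - b1^2*q1 - A1^2*r1 + b2^2*q2 + A2^2*r2)

lemma Plem (g h : Matrix (Fin 3) (Fin 3) ℝ) (hg : g * gᵀ = 1) (hh : h * hᵀ = 1)
    (Q : ∀ i j, g i j ^ 2 = h i j ^ 2) (i k j l : Fin 3) (hjl : j ≠ l) :
    g i j * g i l * g k j * g k l = h i j * h i l * h k j * h k l := by
  rcases eq_or_ne i k with rfl | hik
  · linear_combination (g i l * g i l) * Q i j + (h i j * h i j) * Q i l
  · have eg := congrFun (congrFun hg i) k
    have eh := congrFun (congrFun hh i) k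
    simp [Matrix.mul_apply, Matrix.one_apply, hik, Fin.sum_univ_three,
      Matrix.transpose_apply] at eg eh
    fin_cases j <;> fin_cases l <;> simp_all <;>
      [ exact core22 _ _ _ _ _ _ _ _ _ _ _ _ (by linarith) (by linarith)
          (Q i 0) (Q i 1) (Q i 2) (Q k 0) (Q k 1) (Q k 2);
        exact core22 _ _ _ _ _ _ _ _ _ _ _ _ (by linarith) (by linarith)
          (Q i 0) (Q i 2) (Q i 1) (Q k 0) (Q k 2) (Q k 1);
        exact core22 _ _ _ _ _ _ _ _ _ _ _ _ (by linarith) (by linarith)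
          (Q i 1) (Q i 0) (Q i 2) (Q k 1) (Q k 0) (Q k 2);
        exact core22 _ _ _ _ _ _ _ _ _ _ _ _ (by linarith) (by linarith)
          (Q i 1) (Q i 2) (Q i 0) (Q k 1) (Q k 2) (Q k 0);
        exact core22 _ _ _ _ _ _ _ _ _ _ _ _ (by linarith) (by linarith)
          (Q i 2) (Q i 0) (Q i 1) (Q k 2) (Q k 0) (Q k 1);
        exact core22 _ _ _ _ _ _ _ _ _ _ _ _ (by linarith) (by linarith)
          (Q i 2) (Q i 1) (Q i 0) (Q k 2) (Q k 1) (Q k 0) ]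

lemma fin3cases (j : Fin 3) : j = 0 ∨ j = 1 ∨ j = 2 := by revert j; decide

lemma sqnn (x y : ℝ) (hx : 0 ≤ x) (hy : 0 ≤ y) (h : x ^ 2 = y ^ 2) : x = y := by
  rcases lt_trichotomy x y with hlt | heq | hgt
  · nlinarith
  · exact heq
  · nlinarith

lemma buildc (g h : Matrix (Fin 3) (Fin 3) ℝ) (hh : h * hᵀ = 1)
    (Q : ∀ i j, g i j ^ 2 = h i j ^ 2) (d : Fin 3 → ℝ)
    (hd : ∀ j, d j = 1 ∨ d j = -1)
    (R : ∀ i j l, 0 ≤ g i j * g i l * (h i j * h i l) * (d j * d l)) :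
    ∃ c : Fin 3 → ℝ, (∀ i, c i = 1 ∨ c i = -1) ∧ ∀ i j, g i j = c i * d j * h i j := by
  have dsq : ∀ j, d j ^ 2 = 1 := fun j => by rcases hd j with e | e <;> rw [e] <;> norm_num
  have hnorm : ∀ i, h i 0 ^ 2 + h i 1 ^ 2 + h i 2 ^ 2 = 1 := by
    intro i
    have e := congrFun (congrFun hh i) i
    simp [Matrix.mul_apply, Matrix.one_apply, Fin.sum_univ_three, Matrix.transpose_apply] at e
    linear_combination e
  have ee : ∀ i j l, (g i j * h i j * d j) * (g i l * h i l * d l) = h i j ^ 2 * h i l ^ 2 := by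
    intro i j l
    have hx : 0 ≤ (g i j * h i j * d j) * (g i l * h i l * d l) := by nlinarith [R i j l]
    have hy : 0 ≤ h i j ^ 2 * h i l ^ 2 := by positivity
    refine sqnn _ _ hx hy ?_
    linear_combination (g i j^2*h i j^2*g i l^2*h i l^2*d l^2) * dsq j
      + (g i j^2*h i j^2*g i l^2*h i l^2) * dsq l
      + (h i j^2*g i l^2*h i l^2) * Q i j + (h i j^4*h i l^2) * Q i l
  refine ⟨fun i => g i 0 * h i 0 * d 0 + g i 1 * h i 1 * d 1 + g i 2 * h i 2 * d 2, ?_, ?_⟩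
  · intro i
    apply mul_self_eq_one_iff.1
    linear_combination (ee i 0 0) + (ee i 1 1) + (ee i 2 2) + 2*(ee i 0 1) + 2*(ee i 0 2)
      + 2*(ee i 1 2) + (h i 0^2 + h i 1^2 + h i 2^2 + 1) * hnorm i
  · intro i j
    by_cases hgz : g i j = 0
    · have hz2 : h i j = 0 := by
        have := Q i j; rw [hgz] at this
        simpa [pow_eq_zero_iff] using this.symm
      simp [hgz, hz2]
    · have hhz : h i j ≠ 0 := by
        intro hzz
        apply hgz
        have := Q i j; rw [hzz] at this
        simpa [pow_eq_zero_iff] using this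
      have key : ∀ l, g i l * h i l * d l * (d j * h i j) = g i j * h i l ^ 2 := by
        intro l
        apply mul_left_cancel₀ (mul_ne_zero hgz hhz)
        linear_combination (h i j) * ee i j l - (h i j * h i l ^ 2) * Q i j
      show g i j = (g i 0 * h i 0 * d 0 + g i 1 * h i 1 * d 1 + g i 2 * h i 2 * d 2) * d j * h i j
      linear_combination - key 0 - key 1 - key 2 - g i j * hnorm i

lemma Llem (g h : Matrix (Fin 3) (Fin 3) ℝ) (hg : g * gᵀ = 1) (hh : h * hᵀ = 1)
    (Q : ∀ i j, g i j ^ 2 = h i j ^ 2) (i0 j l : Fin 3) (hjl : j ≠ l)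
    (hj : g i0 j ≠ 0) (hl : g i0 l ≠ 0) (D : ℝ)
    (hD : 0 ≤ D * (g i0 j * h i0 j * (g i0 l * h i0 l))) (i : Fin 3) :
    0 ≤ g i j * g i l * (h i j * h i l) * D := by
  have hne : ∀ a b, g a b ≠ 0 → h a b ≠ 0 := by
    intro a b hab hzz
    apply hab
    have := Q a b; rw [hzz] at this
    simpa [pow_eq_zero_iff] using this
  have ht : g i0 j * h i0 j * (g i0 l * h i0 l) ≠ 0 :=
    mul_ne_zero (mul_ne_zero hj (hne _ _ hj)) (mul_ne_zero hl (hne _ _ hl))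
  have ht2 : 0 < (g i0 j * h i0 j * (g i0 l * h i0 l)) ^ 2 :=
    lt_of_le_of_ne (sq_nonneg _) (Ne.symm (pow_ne_zero 2 ht))
  have hXt : 0 ≤ (g i j * g i l * (h i j * h i l)) * (g i0 j * h i0 j * (g i0 l * h i0 l)) := by
    have hP := Plem g h hg hh Q i i0 j l hjl
    have heq : (g i j * g i l * (h i j * h i l)) * (g i0 j * h i0 j * (g i0 l * h i0 l))
        = (h i j * h i l * (h i0 j * h i0 l)) ^ 2 := by
      linear_combination (h i j * h i l * (h i0 j * h i0 l)) * hP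
    rw [heq]
    positivity
  by_contra hneg
  push_neg at hneg
  nlinarith [mul_nonneg hXt hD]

set_option maxHeartbeats 1000000 in
lemma buildd (g h : Matrix (Fin 3) (Fin 3) ℝ) (hg : g * gᵀ = 1) (hh : h * hᵀ = 1)
    (Q : ∀ i j, g i j ^ 2 = h i j ^ 2) :
    ∃ d : Fin 3 → ℝ, (∀ j, d j = 1 ∨ d j = -1) ∧
      ∀ i j l, 0 ≤ g i j * g i l * (h i j * h i l) * (d j * d l) := by
  have hne : ∀ a b, g a b ≠ 0 → h a b ≠ 0 := by
    intro a b hab hzz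
    apply hab
    have := Q a b; rw [hzz] at this
    simpa [pow_eq_zero_iff] using this
  have orth : ∀ i k, i ≠ k → g i 0 * g k 0 + g i 1 * g k 1 + g i 2 * g k 2 = 0 := by
    intro i k hik
    have e := congrFun (congrFun hg i) k
    simp [Matrix.mul_apply, Matrix.one_apply, hik, Fin.sum_univ_three,
      Matrix.transpose_apply] at e
    linarith [e]
  -- sign value for a linked pair
  have mkD : ∀ i0 j l : Fin 3, g i0 j ≠ 0 → g i0 l ≠ 0 →
      ∃ D : ℝ, (D = 1 ∨ D = -1) ∧
        0 ≤ D * (g i0 j * h i0 j * (g i0 l * h i0 l)) ∧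
        0 ≤ D * (g i0 l * h i0 l * (g i0 j * h i0 j)) := by
    intro i0 j l hj hl
    have ht : g i0 j * h i0 j * (g i0 l * h i0 l) ≠ 0 :=
      mul_ne_zero (mul_ne_zero hj (hne _ _ hj)) (mul_ne_zero hl (hne _ _ hl))
    by_cases hpos : 0 < g i0 j * h i0 j * (g i0 l * h i0 l)
    · exact ⟨1, Or.inl rfl, by nlinarith, by nlinarith⟩
    · have : g i0 j * h i0 j * (g i0 l * h i0 l) < 0 :=
        lt_of_le_of_ne (not_lt.1 hpos) ht
      exact ⟨-1, Or.inr rfl, by nlinarith, by nlinarith⟩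
  have mkD1 : ∀ i0 j : Fin 3, g i0 j ≠ 0 →
      ∃ D : ℝ, (D = 1 ∨ D = -1) ∧ 0 < D * (g i0 j * h i0 j) := by
    intro i0 j hj
    have ht : g i0 j * h i0 j ≠ 0 := mul_ne_zero hj (hne _ _ hj)
    by_cases hpos : 0 < g i0 j * h i0 j
    · exact ⟨1, Or.inl rfl, by nlinarith⟩
    · have : g i0 j * h i0 j < 0 := lt_of_le_of_ne (not_lt.1 hpos) ht
      exact ⟨-1, Or.inr rfl, by nlinarith⟩
  have sqcase : ∀ (i j : Fin 3) (D : ℝ), (D = 1 ∨ D = -1) →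
      0 ≤ g i j * g i j * (h i j * h i j) * (D * D) := by
    intro i j D hD
    rcases hD with e | e <;> rw [e] <;> nlinarith [sq_nonneg (g i j * h i j)]
  by_cases hfull : ∃ i0, g i0 0 ≠ 0 ∧ g i0 1 ≠ 0 ∧ g i0 2 ≠ 0
  · obtain ⟨i0, h0, h1, h2⟩ := hfull
    have hnz : ∀ j, g i0 j ≠ 0 := by intro j; fin_cases j <;> assumption
    choose d hd1 hd2 using fun j => mkD1 i0 j (hnz j)
    refine ⟨d, hd1, ?_⟩
    intro i j l
    rcases eq_or_ne j l with rfl | hjl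
    · exact sqcase i j (d j) (hd1 j)
    · exact Llem g h hg hh Q i0 j l hjl (hnz j) (hnz l) (d j * d l)
        (by nlinarith [mul_pos (hd2 j) (hd2 l)]) i
  · push_neg at hfull
    by_cases h01 : ∃ i1, g i1 0 ≠ 0 ∧ g i1 1 ≠ 0
    · obtain ⟨i1, ha, hb⟩ := h01
      have hcz : g i1 2 = 0 := hfull i1 ha hb
      obtain ⟨D, hD1, hDt, hDt'⟩ := mkD i1 0 1 ha hb
      have c02 : ∀ k, g k 0 = 0 ∨ g k 2 = 0 := by
        intro k; by_contra hcon; push_neg at hcon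
        obtain ⟨k0, k2⟩ := hcon
        have k1 : g k 1 = 0 := by
          by_contra k1ne; exact k2 (hfull k k0 k1ne)
        have hik : i1 ≠ k := by rintro rfl; exact hb k1
        have e := orth i1 k hik
        rw [hcz, k1] at e
        exact mul_ne_zero ha k0 (by linarith)
      have c12 : ∀ k, g k 1 = 0 ∨ g k 2 = 0 := by
        intro k; by_contra hcon; push_neg at hcon
        obtain ⟨k1', k2⟩ := hcon
        have k0 : g k 0 = 0 := by
          by_contra k0ne; exact k2 (hfull k k0ne k1')
        have hik : i1 ≠ k := by rintro rfl; exact k2 hcz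
        have e := orth i1 k hik
        rw [hcz, k0] at e
        exact mul_ne_zero hb k1' (by linarith)
      refine ⟨fun j => if j = 1 then D else 1, ?_, ?_⟩
      · intro j; dsimp only; split_ifs; exacts [hD1, Or.inl rfl]
      · intro i j l
        rcases fin3cases j with rfl | rfl | rfl <;> rcases fin3cases l with rfl | rfl | rfl <;>
            norm_num [Fin.ext_iff]
        · nlinarith [sq_nonneg (g i 0 * h i 0)]
        · nlinarith [Llem g h hg hh Q i1 0 1 (by decide) ha hb D hDt i]
        · rcases c02 i with hz | hz <;> simp [hz]
        · nlinarith [Llem g h hg hh Q i1 1 0 (by decide) hb ha D (by nlinarith [hDt']) i]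
        · rcases hD1 with e | e <;> rw [e] <;> nlinarith [sq_nonneg (g i 1 * h i 1)]
        · rcases c12 i with hz | hz <;> simp [hz]
        · rcases c02 i with hz | hz <;> simp [hz]
        · rcases c12 i with hz | hz <;> simp [hz]
        · nlinarith [sq_nonneg (g i 2 * h i 2)]
    · push_neg at h01
      by_cases h02 : ∃ i1, g i1 0 ≠ 0 ∧ g i1 2 ≠ 0
      · obtain ⟨i1, ha, hb⟩ := h02
        have hcz : g i1 1 = 0 := h01 i1 ha
        obtain ⟨D, hD1, hDt, hDt'⟩ := mkD i1 0 2 ha hb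
        have c01 : ∀ k, g k 0 = 0 ∨ g k 1 = 0 := by
          intro k; by_cases k0 : g k 0 = 0
          · exact Or.inl k0
          · exact Or.inr (h01 k k0)
        have c12 : ∀ k, g k 1 = 0 ∨ g k 2 = 0 := by
          intro k; by_contra hcon; push_neg at hcon
          obtain ⟨k1', k2⟩ := hcon
          have k0 : g k 0 = 0 := by
            by_contra k0ne; exact k1' (h01 k k0ne)
          have hik : i1 ≠ k := by rintro rfl; exact k1' hcz
          have e := orth i1 k hik
          rw [hcz, k0] at e
          exact mul_ne_zero hb k2 (by linarith)
        refine ⟨fun j => if j = 2 then D else 1, ?_, ?_⟩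
        · intro j; dsimp only; split_ifs; exacts [hD1, Or.inl rfl]
        · intro i j l
          rcases fin3cases j with rfl | rfl | rfl <;> rcases fin3cases l with rfl | rfl | rfl <;>
            norm_num [Fin.ext_iff]
          · nlinarith [sq_nonneg (g i 0 * h i 0)]
          · rcases c01 i with hz | hz <;> simp [hz]
          · nlinarith [Llem g h hg hh Q i1 0 2 (by decide) ha hb D hDt i]
          · rcases c01 i with hz | hz <;> simp [hz]
          · nlinarith [sq_nonneg (g i 1 * h i 1)]
          · rcases c12 i with hz | hz <;> simp [hz]
          · nlinarith [Llem g h hg hh Q i1 2 0 (by decide) hb ha D (by nlinarith [hDt']) i]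
          · rcases c12 i with hz | hz <;> simp [hz]
          · rcases hD1 with e | e <;> rw [e] <;> nlinarith [sq_nonneg (g i 2 * h i 2)]
      · push_neg at h02
        by_cases h12 : ∃ i1, g i1 1 ≠ 0 ∧ g i1 2 ≠ 0
        · obtain ⟨i1, ha, hb⟩ := h12
          obtain ⟨D, hD1, hDt, hDt'⟩ := mkD i1 1 2 ha hb
          have c01 : ∀ k, g k 0 = 0 ∨ g k 1 = 0 := by
            intro k; by_cases k0 : g k 0 = 0
            · exact Or.inl k0
            · exact Or.inr (h01 k k0)
          have c02 : ∀ k, g k 0 = 0 ∨ g k 2 = 0 := by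
            intro k; by_cases k0 : g k 0 = 0
            · exact Or.inl k0
            · exact Or.inr (h02 k k0)
          refine ⟨fun j => if j = 2 then D else 1, ?_, ?_⟩
          · intro j; dsimp only; split_ifs; exacts [hD1, Or.inl rfl]
          · intro i j l
            rcases fin3cases j with rfl | rfl | rfl <;> rcases fin3cases l with rfl | rfl | rfl <;>
            norm_num [Fin.ext_iff]
            · nlinarith [sq_nonneg (g i 0 * h i 0)]
            · rcases c01 i with hz | hz <;> simp [hz]
            · rcases c02 i with hz | hz <;> simp [hz]
            · rcases c01 i with hz | hz <;> simp [hz]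
            · nlinarith [sq_nonneg (g i 1 * h i 1)]
            · nlinarith [Llem g h hg hh Q i1 1 2 (by decide) ha hb D hDt i]
            · rcases c02 i with hz | hz <;> simp [hz]
            · nlinarith [Llem g h hg hh Q i1 2 1 (by decide) hb ha D (by nlinarith [hDt']) i]
            · rcases hD1 with e | e <;> rw [e] <;> nlinarith [sq_nonneg (g i 2 * h i 2)]
        · push_neg at h12
          refine ⟨fun _ => 1, fun _ => Or.inl rfl, ?_⟩
          intro i j l
          have c01 : ∀ k, g k 0 = 0 ∨ g k 1 = 0 := by
            intro k; by_cases k0 : g k 0 = 0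
            · exact Or.inl k0
            · exact Or.inr (h01 k k0)
          have c02 : ∀ k, g k 0 = 0 ∨ g k 2 = 0 := by
            intro k; by_cases k0 : g k 0 = 0
            · exact Or.inl k0
            · exact Or.inr (h02 k k0)
          have c12 : ∀ k, g k 1 = 0 ∨ g k 2 = 0 := by
            intro k; by_cases k1 : g k 1 = 0
            · exact Or.inl k1
            · exact Or.inr (h12 k k1)
          rcases fin3cases j with rfl | rfl | rfl <;> rcases fin3cases l with rfl | rfl | rfl <;>
            norm_num [Fin.ext_iff]
          · nlinarith [sq_nonneg (g i 0 * h i 0)]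
          · rcases c01 i with hz | hz <;> simp [hz]
          · rcases c02 i with hz | hz <;> simp [hz]
          · rcases c01 i with hz | hz <;> simp [hz]
          · nlinarith [sq_nonneg (g i 1 * h i 1)]
          · rcases c12 i with hz | hz <;> simp [hz]
          · rcases c02 i with hz | hz <;> simp [hz]
          · rcases c12 i with hz | hz <;> simp [hz]
          · nlinarith [sq_nonneg (g i 2 * h i 2)]

lemma pauliSq (i : Fin 3) : pauli i * pauli i = -1 := by
  fin_cases i <;>
    · ext a b
      fin_cases a <;> fin_cases b <;>
        simp [pauli, Matrix.mul_apply, Fin.sum_univ_two, Matrix.one_apply, Complex.I_mul_I]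

lemma piRepSq (g : Matrix (Fin 3) (Fin 3) ℝ) (i j : Fin 3) :
    piRep g i j * piRep g i j = (((g i j) ^ 2 : ℝ) : ℂ) • 1 := by
  unfold piRep
  rw [smul_mul_smul_comm, ← Matrix.mul_kronecker_mul, pauliSq, pauliSq,
    show ((-1 : Matrix (Fin 2) (Fin 2) ℂ)) = (-1 : ℂ) • 1 from by simp,
    Matrix.smul_kronecker, Matrix.kronecker_smul, Matrix.one_kronecker_one,
    smul_smul, smul_smul]
  push_cast
  norm_num
  ring_nf

lemma rhoSq (g : Matrix (Fin 3) (Fin 3) ℝ) (n : ℕ)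
    (ρ : Fin 3 → Fin 3 → Matrix (Fin n) (Fin n) ℂ)
    (W : Matrix (Fin 2 × Fin 2) (Fin n) ℂ) (hW : Wᴴ * W = 1)
    (hint : ∀ i j, piRep g i j * W = W * ρ i j) (i j : Fin 3) :
    ρ i j * ρ i j = (((g i j) ^ 2 : ℝ) : ℂ) • 1 := by
  have e : W * (ρ i j * ρ i j) = (((g i j) ^ 2 : ℝ) : ℂ) • W := by
    rw [← Matrix.mul_assoc, ← hint, Matrix.mul_assoc, ← hint, ← Matrix.mul_assoc,
      piRepSq, Matrix.smul_mul, Matrix.one_mul]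
  calc ρ i j * ρ i j = 1 * (ρ i j * ρ i j) := (Matrix.one_mul _).symm
  _ = Wᴴ * W * (ρ i j * ρ i j) := by rw [hW]
  _ = Wᴴ * (W * (ρ i j * ρ i j)) := by rw [Matrix.mul_assoc]
  _ = Wᴴ * ((((g i j) ^ 2 : ℝ) : ℂ) • W) := by rw [e]
  _ = (((g i j) ^ 2 : ℝ) : ℂ) • (Wᴴ * W) := by rw [Matrix.mul_smul]
  _ = (((g i j) ^ 2 : ℝ) : ℂ) • 1 := by rw [hW]

lemma sqEq (g h : Matrix (Fin 3) (Fin 3) ℝ) (n : ℕ) (hn : 0 < n)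
    (ρ : Fin 3 → Fin 3 → Matrix (Fin n) (Fin n) ℂ)
    (Wg Wh : Matrix (Fin 2 × Fin 2) (Fin n) ℂ)
    (hWg : Wgᴴ * Wg = 1) (hWh : Whᴴ * Wh = 1)
    (hintg : ∀ i j, piRep g i j * Wg = Wg * ρ i j)
    (hinth : ∀ i j, piRep h i j * Wh = Wh * ρ i j) (i j : Fin 3) :
    g i j ^ 2 = h i j ^ 2 := by
  have e1 := rhoSq g n ρ Wg hWg hintg i j
  have e2 := rhoSq h n ρ Wh hWh hinth i j
  rw [e1] at e2
  have z : Fin n := ⟨0, hn⟩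
  have := congrFun (congrFun e2 z) z
  simp [Matrix.smul_apply, Matrix.one_apply] at this
  exact_mod_cast this

lemma fin3cases' (j : Fin 3) : j = 0 ∨ j = 1 ∨ j = 2 := by revert j; decide

lemma kleinFromSign (c : Fin 3 → ℝ) (hc : ∀ i, c i = 1 ∨ c i = -1)
    (hp : c 0 * c 1 * c 2 = 1) : ∃ m : Fin 4, kleinGroup m = Matrix.diagonal c := by
  have key : ∀ m : Fin 4,
      ((fun j : Fin 3 => if (m : ℕ) = 0 ∨ (j : ℕ) + 1 = (m : ℕ) then (1:ℝ) else -1) = c) →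
      kleinGroup m = Matrix.diagonal c := by
    intro m hm; unfold kleinGroup; rw [hm]
  rcases hc 0 with h0 | h0 <;> rcases hc 1 with h1 | h1 <;> rcases hc 2 with h2 | h2 <;>
    rw [h0, h1, h2] at hp <;> norm_num at hp
  · exact ⟨0, key 0 (by funext j; rcases fin3cases' j with rfl | rfl | rfl <;> norm_num [h0, h1, h2, show ((0:Fin 4):ℕ) = 0 from rfl, show ((1:Fin 4):ℕ) = 1 from rfl, show ((2:Fin 4):ℕ) = 2 from rfl, show ((3:Fin 4):ℕ) = 3 from rfl, show ((0:Fin 3):ℕ) = 0 from rfl, show ((1:Fin 3):ℕ) = 1 from rfl, show ((2:Fin 3):ℕ) = 2 from rfl])⟩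
  · exact ⟨1, key 1 (by funext j; rcases fin3cases' j with rfl | rfl | rfl <;> norm_num [h0, h1, h2, show ((0:Fin 4):ℕ) = 0 from rfl, show ((1:Fin 4):ℕ) = 1 from rfl, show ((2:Fin 4):ℕ) = 2 from rfl, show ((3:Fin 4):ℕ) = 3 from rfl, show ((0:Fin 3):ℕ) = 0 from rfl, show ((1:Fin 3):ℕ) = 1 from rfl, show ((2:Fin 3):ℕ) = 2 from rfl])⟩
  · exact ⟨2, key 2 (by funext j; rcases fin3cases' j with rfl | rfl | rfl <;> norm_num [h0, h1, h2, show ((0:Fin 4):ℕ) = 0 from rfl, show ((1:Fin 4):ℕ) = 1 from rfl, show ((2:Fin 4):ℕ) = 2 from rfl, show ((3:Fin 4):ℕ) = 3 from rfl, show ((0:Fin 3):ℕ) = 0 from rfl, show ((1:Fin 3):ℕ) = 1 from rfl, show ((2:Fin 3):ℕ) = 2 from rfl])⟩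
  · exact ⟨3, key 3 (by funext j; rcases fin3cases' j with rfl | rfl | rfl <;> norm_num [h0, h1, h2, show ((0:Fin 4):ℕ) = 0 from rfl, show ((1:Fin 4):ℕ) = 1 from rfl, show ((2:Fin 4):ℕ) = 2 from rfl, show ((3:Fin 4):ℕ) = 3 from rfl, show ((0:Fin 3):ℕ) = 0 from rfl, show ((1:Fin 3):ℕ) = 1 from rfl, show ((2:Fin 3):ℕ) = 2 from rfl])⟩

lemma assemble (g h : Matrix (Fin 3) (Fin 3) ℝ) (hgdet : g.det = 1) (hhdet : h.det = 1)
    (c d : Fin 3 → ℝ) (hc : ∀ i, c i = 1 ∨ c i = -1) (hd : ∀ j, d j = 1 ∨ d j = -1)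
    (heq : ∀ i j, g i j = c i * d j * h i j) :
    ∃ c' d' : Fin 4, g = kleinGroup c' * h * kleinGroup d' := by
  have gmat : g = Matrix.diagonal c * h * Matrix.diagonal d := by
    ext i j
    rw [Matrix.mul_diagonal, Matrix.diagonal_mul, heq i j]
    ring
  have hdet : (c 0 * c 1 * c 2) * (d 0 * d 1 * d 2) = 1 := by
    have := hgdet
    rw [gmat, Matrix.det_mul, Matrix.det_mul, Matrix.det_diagonal, Matrix.det_diagonal,
      Fin.prod_univ_three, Fin.prod_univ_three, hhdet] at this
    linarith [this]
  have hpc : c 0 * c 1 * c 2 = 1 ∨ c 0 * c 1 * c 2 = -1 := by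
    rcases hc 0 with h0 | h0 <;> rcases hc 1 with h1 | h1 <;> rcases hc 2 with h2 | h2 <;>
      rw [h0, h1, h2] <;> norm_num
  rcases hpc with hpc | hpc
  · have hpd : d 0 * d 1 * d 2 = 1 := by rw [hpc] at hdet; linarith
    obtain ⟨m1, hm1⟩ := kleinFromSign c hc hpc
    obtain ⟨m2, hm2⟩ := kleinFromSign d hd hpd
    exact ⟨m1, m2, by rw [hm1, hm2]; exact gmat⟩
  · have hpd : d 0 * d 1 * d 2 = -1 := by
      rcases hd 0 with h0 | h0 <;> rcases hd 1 with h1 | h1 <;> rcases hd 2 with h2 | h2 <;>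
        rw [h0, h1, h2] <;> rw [h0, h1, h2] at hdet <;> rw [hpc] at hdet <;> linarith
    obtain ⟨m1, hm1⟩ := kleinFromSign (fun i => -c i) (fun i => by rcases hc i with e | e <;> simp [e])
      (by beta_reduce; rw [show (-c 0) * (-c 1) * (-c 2) = -(c 0 * c 1 * c 2) from by ring, hpc]; norm_num)
    obtain ⟨m2, hm2⟩ := kleinFromSign (fun j => -d j) (fun j => by rcases hd j with e | e <;> simp [e])
      (by beta_reduce; rw [show (-d 0) * (-d 1) * (-d 2) = -(d 0 * d 1 * d 2) from by ring, hpd]; norm_num)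
    refine ⟨m1, m2, ?_⟩
    rw [hm1, hm2]
    have e1 : Matrix.diagonal (fun i => -c i) = -Matrix.diagonal c := by
      rw [← Matrix.diagonal_neg]
    have e2 : Matrix.diagonal (fun j => -d j) = -Matrix.diagonal d := by
      rw [← Matrix.diagonal_neg]
    rw [e1, e2, Matrix.neg_mul, Matrix.mul_neg, Matrix.neg_mul, neg_neg]
    exact gmat

/-- if `g, h ∈ SO(3)` are such that `π_g` and `π_h` admit a common irreducible
subrepresentation `ρ` (realised on `ℂⁿ`, `n > 0`, via isometries `W_g, W_h` intertwining `ρ`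
with `π_g` resp. `π_h`), then `|g_{ij}| = |h_{ij}|` for all `i, j`, and consequently
`g = c h d` for some `c, d` in the Klein group `D`. -/
theorem stmt10 (g h : Matrix (Fin 3) (Fin 3) ℝ)
    (hg : g * gᵀ = 1) (hgdet : g.det = 1) (hh : h * hᵀ = 1) (hhdet : h.det = 1)
    (n : ℕ) (hn : 0 < n) (ρ : Fin 3 → Fin 3 → Matrix (Fin n) (Fin n) ℂ)
    (hirr : ∀ T : Matrix (Fin n) (Fin n) ℂ,
      (∀ i j, T * ρ i j = ρ i j * T) → ∃ c : ℂ, T = c • 1)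
    (Wg Wh : Matrix (Fin 2 × Fin 2) (Fin n) ℂ)
    (hWg : Wgᴴ * Wg = 1) (hWh : Whᴴ * Wh = 1)
    (hintg : ∀ i j, piRep g i j * Wg = Wg * ρ i j)
    (hinth : ∀ i j, piRep h i j * Wh = Wh * ρ i j) :
    (∀ i j, |g i j| = |h i j|) ∧
    ∃ c d : Fin 4, g = kleinGroup c * h * kleinGroup d := by
  have Q : ∀ i j, g i j ^ 2 = h i j ^ 2 := fun i j =>
    sqEq g h n hn ρ Wg Wh hWg hWh hintg hinth i j
  constructor
  · intro i j
    exact sqnn |g i j| |h i j| (abs_nonneg _) (abs_nonneg _)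
      (by rw [sq_abs, sq_abs]; exact Q i j)
  · obtain ⟨d, hd, R⟩ := buildd g h hg hh Q
    obtain ⟨c, hc, heq⟩ := buildc g h hh Q d hd R
    exact assemble g h hgdet hhdet c d hc hd heq
end
end

section
/- Let X = (V, E) be a graph and (H, u) a quantum automorphism of X. If x₁, x₂, y₁, y₂ ∈ V satisfy d(x₁, x₂) ≠ d(y₁, y₂) (graph distances, possibly infinite), then u_{x₁ y₁} u_{x₂ y₂} = 0. -/
noncomputable section

def IsProjection {H : Type*} [NormedAddCommGroup H] [InnerProductSpace ℂ H] [CompleteSpace H]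
    (p : H →L[ℂ] H) : Prop :=
  IsIdempotentElem p ∧ IsSelfAdjoint p

def IsQuantumPermutation {X H : Type*} [NormedAddCommGroup H] [InnerProductSpace ℂ H]
    [CompleteSpace H] (u : X → X → H →L[ℂ] H) : Prop :=
  (∀ x y, IsProjection (u x y)) ∧
  (∀ x z z', z ≠ z' → u x z * u x z' = 0) ∧
  (∀ y z z', z ≠ z' → u z y * u z' y = 0) ∧
  (∀ x (ξ : H), HasSum (fun z => u x z ξ) ξ) ∧
  (∀ y (ξ : H), HasSum (fun z => u z y ξ) ξ)

/-- A quantum automorphism of a graph `G`: a quantum permutation of its vertex set with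
`u_{x₁y₁} u_{x₂y₂} = 0` whenever `rel(x₁,x₂) ≠ rel(y₁,y₂)`, where `rel` distinguishes
'equal', 'adjacent' and 'distinct non-adjacent'. -/
def IsQuantumAut {V H : Type*} [NormedAddCommGroup H] [InnerProductSpace ℂ H]
    [CompleteSpace H] (G : SimpleGraph V) (u : V → V → H →L[ℂ] H) : Prop :=
  IsQuantumPermutation u ∧
  ∀ x₁ x₂ y₁ y₂, ¬((x₁ = x₂ ↔ y₁ = y₂) ∧ (G.Adj x₁ x₂ ↔ G.Adj y₁ y₂)) →
    u x₁ y₁ * u x₂ y₂ = 0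

/-- The transpose of a quantum automorphism is a quantum automorphism. -/
lemma isQuantumAut_transpose {V H : Type*} [NormedAddCommGroup H] [InnerProductSpace ℂ H]
    [CompleteSpace H] {G : SimpleGraph V} {u : V → V → H →L[ℂ] H} (hu : IsQuantumAut G u) :
    IsQuantumAut G (fun x y => u y x) := by
  obtain ⟨⟨hp, hrow, hcol, hrs, hcs⟩, hrel⟩ := hu
  refine ⟨⟨fun x y => hp y x, fun x z z' h => hcol x z z' h, fun y z z' h => hrow y z z' h,
    fun x ξ => hcs x ξ, fun y ξ => hrs y ξ⟩, fun x₁ x₂ y₁ y₂ h => ?_⟩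
  refine hrel y₁ y₂ x₁ x₂ fun ⟨h1, h2⟩ => h ⟨h1.symm, h2.symm⟩

/-- If the distance from `x₁` to `x₂` is `n + 1`, there is a vertex adjacent to `x₂` at
distance `n` from `x₁`. -/
lemma exists_mid {V : Type*} {G : SimpleGraph V} {x₁ x₂ : V} {n : ℕ}
    (h : G.edist x₁ x₂ = (n + 1 : ℕ)) :
    ∃ x, G.Adj x x₂ ∧ G.edist x₁ x = n := by
  obtain ⟨p, hp⟩ := SimpleGraph.exists_walk_of_edist_eq_coe h
  have hpr : p.reverse.length = n + 1 := by rwa [SimpleGraph.Walk.length_reverse]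
  cases hq : p.reverse with
  | nil => rw [hq] at hpr; simp at hpr
  | cons hadj q =>
    rw [hq] at hpr
    simp only [SimpleGraph.Walk.length_cons, Nat.add_right_cancel_iff] at hpr
    rename_i x
    refine ⟨x, hadj.symm, le_antisymm ?_ ?_⟩
    · calc G.edist x₁ x ≤ q.reverse.length := SimpleGraph.edist_le _
        _ = n := by rw [SimpleGraph.Walk.length_reverse, hpr]
    · by_contra hlt
      push_neg at hlt
      have h1 : G.edist x₁ x₂ ≤ G.edist x₁ x + G.edist x x₂ := SimpleGraph.edist_triangle
      have h2 : G.edist x x₂ ≤ 1 := le_of_eq (SimpleGraph.edist_eq_one_iff_adj.mpr hadj.symm)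
      have h3 : G.edist x₁ x₂ ≤ G.edist x₁ x + 1 := h1.trans (by gcongr)
      rw [h] at h3
      have h4 : (n : ℕ∞) + 1 ≤ G.edist x₁ x + 1 := by
        rw [← Nat.cast_add_one]; exact h3
      have h5 : (n : ℕ∞) ≤ G.edist x₁ x :=
        (WithTop.add_le_add_iff_right (by exact ENat.one_ne_top)).mp h4
      exact absurd h5 (not_le.mpr hlt)

/-- Key lemma: if `d(x₁,x₂) = n` and `d(y₁,y₂) > n` then `u_{x₁y₁} u_{x₂y₂} = 0`. -/
lemma key_lemma {V H : Type*} [NormedAddCommGroup H] [InnerProductSpace ℂ H] [CompleteSpace H]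
    (G : SimpleGraph V) :
    ∀ n : ℕ, ∀ u : V → V → H →L[ℂ] H, IsQuantumAut G u → ∀ x₁ x₂ y₁ y₂ : V,
      G.edist x₁ x₂ = n → (n : ℕ∞) < G.edist y₁ y₂ → u x₁ y₁ * u x₂ y₂ = 0 := by
  intro n
  induction n using Nat.strong_induction_on with
  | _ n IH =>
    intro u hu x₁ x₂ y₁ y₂ hx hy
    match n with
    | 0 =>
      have hx12 : x₁ = x₂ := by
        rw [← SimpleGraph.edist_eq_zero_iff (G := G)]; simpa using hx
      have hy12 : y₁ ≠ y₂ := by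
        intro h
        rw [h, SimpleGraph.edist_self] at hy
        simp at hy
      exact hu.2 x₁ x₂ y₁ y₂ (by tauto)
    | 1 =>
      have hadj : G.Adj x₁ x₂ := SimpleGraph.edist_eq_one_iff_adj.mp (by simpa using hx)
      have hnadj : ¬ G.Adj y₁ y₂ := by
        intro h
        have : G.edist y₁ y₂ = 1 := SimpleGraph.edist_eq_one_iff_adj.mpr h
        rw [this] at hy
        simp at hy
      exact hu.2 x₁ x₂ y₁ y₂ (by tauto)
    | (m + 2) =>
      obtain ⟨x, hxadj, hxd⟩ := exists_mid (n := m + 1) (by exact_mod_cast hx)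
      -- every intermediate term vanishes
      have hterm : ∀ y : V, u x₁ y₁ * u x y = 0 ∨ u x y * u x₂ y₂ = 0 := by
        intro y
        rcases lt_trichotomy (G.edist y₁ y) ((m + 1 : ℕ) : ℕ∞) with hlt | heq | hgt
        · -- distance smaller: use transposed automorphism and IH
          left
          have hne : G.edist y₁ y ≠ ⊤ := ne_top_of_lt hlt
          lift G.edist y₁ y to ℕ using hne with k hk
          have hk' : k < m + 1 := by exact_mod_cast hlt
          have := IH k (by omega) (fun a b => u b a) (isQuantumAut_transpose hu)
            y₁ y x₁ x hk.symm (by rw [hxd]; exact_mod_cast hk')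
          exact this
        · -- distance equal: then y is not adjacent to y₂ and y ≠ y₂
          right
          have hyne : y ≠ y₂ := by
            intro h; rw [← h] at hy; rw [heq] at hy
            exact absurd hy (by exact_mod_cast (by omega : ¬ (m + 2 : ℕ) < m + 1))
          have hnadj : ¬ G.Adj y y₂ := by
            intro h
            have h1 : G.edist y₁ y₂ ≤ G.edist y₁ y + G.edist y y₂ := SimpleGraph.edist_triangle
            have h2 : G.edist y y₂ ≤ 1 := le_of_eq (SimpleGraph.edist_eq_one_iff_adj.mpr h)
            have h3 : G.edist y₁ y₂ ≤ ((m + 1 : ℕ) : ℕ∞) + 1 := by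
              rw [← heq]; exact h1.trans (by gcongr)
            have h4 : G.edist y₁ y₂ ≤ ((m + 2 : ℕ) : ℕ∞) := by
              rw [show ((m + 2 : ℕ) : ℕ∞) = ((m + 1 : ℕ) : ℕ∞) + 1 by push_cast; ring]
              exact h3
            exact absurd hy (not_lt.mpr h4)
          exact hu.2 x x₂ y y₂ (by tauto)
        · -- distance larger: IH at m + 1
          left
          exact IH (m + 1) (by omega) u hu x₁ x y₁ y hxd hgt
      -- assemble: u x₁ y₁ * u x₂ y₂ = ∑_y u x₁ y₁ * u x y * u x₂ y₂ = 0
      ext ξ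
      have hsum : HasSum (fun y => u x y (u x₂ y₂ ξ)) (u x₂ y₂ ξ) :=
        hu.1.2.2.2.1 x (u x₂ y₂ ξ)
      have hmap : HasSum (fun y => u x₁ y₁ (u x y (u x₂ y₂ ξ)))
          (u x₁ y₁ (u x₂ y₂ ξ)) := (u x₁ y₁).hasSum hsum
      have hzero : ∀ y : V, u x₁ y₁ (u x y (u x₂ y₂ ξ)) = 0 := by
        intro y
        rcases hterm y with h | h
        · have : (u x₁ y₁ * u x y) (u x₂ y₂ ξ) = 0 := by rw [h]; rfl
          simpa [ContinuousLinearMap.mul_apply] using this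
        · have : (u x y * u x₂ y₂) ξ = 0 := by rw [h]; rfl
          rw [ContinuousLinearMap.mul_apply] at this
          rw [this, map_zero]
      simp only [hzero] at hmap
      have := hmap.unique hasSum_zero
      simpa [ContinuousLinearMap.mul_apply] using this

/-- a quantum automorphism kills products of entries associated to pairs of
vertices at different (possibly infinite) distances. -/
theorem stmt11 {V H : Type*} [NormedAddCommGroup H] [InnerProductSpace ℂ H] [CompleteSpace H]
    (G : SimpleGraph V) (u : V → V → H →L[ℂ] H) (hu : IsQuantumAut G u)
    (x₁ x₂ y₁ y₂ : V) (hd : G.edist x₁ x₂ ≠ G.edist y₁ y₂) :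
    u x₁ y₁ * u x₂ y₂ = 0 := by
  rcases lt_or_gt_of_ne hd with h | h
  · have hne : G.edist x₁ x₂ ≠ ⊤ := ne_top_of_lt h
    lift G.edist x₁ x₂ to ℕ using hne with k hk
    exact key_lemma G k u hu x₁ x₂ y₁ y₂ hk.symm (hk ▸ h)
  · have hne : G.edist y₁ y₂ ≠ ⊤ := ne_top_of_lt h
    lift G.edist y₁ y₂ to ℕ using hne with k hk
    exact key_lemma G k (fun a b => u b a) (isQuantumAut_transpose hu)
      y₁ y₂ x₁ x₂ hk.symm (hk ▸ h)
end
end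

section
/- Let L be the 'infinite line' graph with vertex set Z and edges between i and j iff |i − j| = 1, and let (H, u) be a quantum automorphism of L. Then, with p_α(±) := u_{x(±), y₁(±)} type projections as in the inductive scheme, the base case holds: u_{0,0} commutes with u_{1,1}, u_{1,−1}, u_{−1,1}, and u_{−1,−1}. More precisely, from the relations u_{i,j+1} + u_{i,j−1} = u_{i+1,j} + u_{i−1,j} and the magic-unitary orthogonality relations one derives u_{1,1} ⊕ u_{1,−1} = (u_{0,0} ∧ u_{1,1}) ⊕ (u_{0,0} ∧ u_{1,−1}) ⊕ (u_{2,0} ∧ u_{1,1}) ⊕ (u_{2,0} ∧ u_{1,−1}), and in particular u_{0,0} u_{1,1} = u_{1,1} u_{0,0}. -/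
set_option linter.unusedSectionVars false


noncomputable section

/-- The 'infinite line' graph `L`: vertex set `ℤ`, edges between `i` and `j` iff `|i−j| = 1`. -/
def lineGraph : SimpleGraph ℤ where
  Adj i j := |i - j| = 1
  symm := ⟨fun i j h => by simpa [abs_sub_comm] using h⟩
  loopless := ⟨fun i h => by simp at h⟩

/-- `m` is the projection `p ∧ q` onto the intersection of the ranges of the projections
`p` and `q`. -/
def IsMeetProj {H : Type*} [NormedAddCommGroup H] [InnerProductSpace ℂ H] [CompleteSpace H]
    (p q m : H →L[ℂ] H) : Prop :=
  IsProjection m ∧ LinearMap.range (m : H →ₗ[ℂ] H) = LinearMap.range (p : H →ₗ[ℂ] H) ⊓ LinearMap.range (q : H →ₗ[ℂ] H)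

section Aux

variable {H : Type*} [NormedAddCommGroup H] [InnerProductSpace ℂ H] [CompleteSpace H]

lemma two_term {f : ℤ → H} {s : H} (hf : HasSum f s) (j₁ j₂ : ℤ) (hne : j₁ ≠ j₂)
    (hz : ∀ z, z ≠ j₁ → z ≠ j₂ → f z = 0) : s = f j₁ + f j₂ := by
  have h2 : HasSum f (∑ b ∈ ({j₁, j₂} : Finset ℤ), f b) := by
    apply hasSum_sum_of_ne_finset_zero
    intro b hb
    simp only [Finset.mem_insert, Finset.mem_singleton, not_or] at hb
    exact hz b hb.1 hb.2
  rw [Finset.sum_pair hne] at h2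
  exact hf.unique h2

variable {u : ℤ → ℤ → H →L[ℂ] H}

lemma uvanish (hu : IsQuantumAut lineGraph u) {x1 x2 y1 y2 : ℤ}
    (h : ¬((x1 = x2 ↔ y1 = y2) ∧
      ((x1 - x2 = 1 ∨ x1 - x2 = -1) ↔ (y1 - y2 = 1 ∨ y1 - y2 = -1)))) :
    u x1 y1 * u x2 y2 = 0 := by
  apply hu.2 x1 x2 y1 y2
  rintro ⟨h1, h2⟩
  have h2' : (|x1 - x2| = 1 ↔ |y1 - y2| = 1) := h2
  rw [abs_eq (by norm_num : (0:ℤ) ≤ 1), abs_eq (by norm_num : (0:ℤ) ≤ 1)] at h2'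
  exact h ⟨h1, h2'⟩

lemma colRight (hu : IsQuantumAut lineGraph u) (c : H →L[ℂ] H) (y j₁ j₂ : ℤ)
    (hne : j₁ ≠ j₂) (hz : ∀ z, z ≠ j₁ → z ≠ j₂ → c * u z y = 0) :
    c = c * u j₁ y + c * u j₂ y := by
  ext ξ
  have hs : HasSum (fun z => c (u z y ξ)) (c ξ) := (hu.1.2.2.2.2 y ξ).mapL c
  have h := two_term hs j₁ j₂ hne (fun z h1 h2 => by
    show c (u z y ξ) = 0
    rw [← ContinuousLinearMap.mul_apply, hz z h1 h2, ContinuousLinearMap.zero_apply])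
  simpa only [ContinuousLinearMap.add_apply, ContinuousLinearMap.mul_apply] using h

lemma key {p a q : H →L[ℂ] H} (hp : star p = p) (ha : star a = a)
    (h1 : a = a * p + a * q) (h2 : p * a * q = 0) : p * a = a * p := by
  have hpap : p * a = p * a * p := by
    conv_lhs => rw [h1]
    rw [mul_add, ← mul_assoc, ← mul_assoc, h2, add_zero]
  have h3 := congrArg star hpap
  rw [star_mul, star_mul, star_mul, hp, ha] at h3
  rw [← mul_assoc] at h3
  exact hpap.trans h3.symm

lemma h2aux {p a c q : H →L[ℂ] H} (h1 : p = p * a + c) (hpq : p * q = 0)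
    (hcq : c * q = 0) : p * a * q = 0 := by
  have hpa : p * a = p - c := eq_sub_of_add_eq h1.symm
  rw [hpa, sub_mul, hpq, hcq, sub_zero]

lemma fixes {e : H →L[ℂ] H} (he : IsIdempotentElem e) {ξ : H}
    (hξ : ξ ∈ LinearMap.range (e : H →ₗ[ℂ] H)) : e ξ = ξ := by
  obtain ⟨η, rfl⟩ := LinearMap.mem_range.mp hξ
  rw [ContinuousLinearMap.coe_coe, ← ContinuousLinearMap.mul_apply, he.eq]

lemma proj_ext {m m' : H →L[ℂ] H} (hm : IsProjection m) (hm' : IsProjection m')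
    (h : LinearMap.range (m : H →ₗ[ℂ] H) = LinearMap.range (m' : H →ₗ[ℂ] H)) : m = m' := by
  have h1 : m' * m = m := by
    ext ξ
    simp only [ContinuousLinearMap.mul_apply]
    exact fixes hm'.1 (by rw [← h]; exact LinearMap.mem_range.mpr ⟨ξ, rfl⟩)
  have h2 : m * m' = m' := by
    ext ξ
    simp only [ContinuousLinearMap.mul_apply]
    exact fixes hm.1 (by rw [h]; exact LinearMap.mem_range.mpr ⟨ξ, rfl⟩)
  have h3 := congrArg star h1
  rw [star_mul, hm.2.star_eq, hm'.2.star_eq] at h3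
  exact h3.symm.trans h2

lemma meet_eq {p a m : H →L[ℂ] H} (hp : IsProjection p) (ha : IsProjection a)
    (hc : p * a = a * p) (hm : IsMeetProj p a m) : m = p * a := by
  have key1 : a * (p * a) = p * a := by
    rw [← mul_assoc, ← hc, mul_assoc, ha.1.eq]
  have hproj : IsProjection (p * a) := by
    constructor
    · show p * a * (p * a) = p * a
      rw [mul_assoc, key1, ← mul_assoc, hp.1.eq]
    · show star (p * a) = p * a
      rw [star_mul, ha.2.star_eq, hp.2.star_eq, ← hc]
  have hrange : LinearMap.range ((p * a : H →L[ℂ] H) : H →ₗ[ℂ] H) = LinearMap.range (p : H →ₗ[ℂ] H) ⊓ LinearMap.range (a : H →ₗ[ℂ] H) := by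
    ext ξ
    simp only [Submodule.mem_inf, LinearMap.mem_range, ContinuousLinearMap.coe_coe]
    constructor
    · rintro ⟨η, rfl⟩
      exact ⟨⟨a η, (ContinuousLinearMap.mul_apply p a η).symm⟩,
        ⟨p η, by rw [← ContinuousLinearMap.mul_apply, ← hc]⟩⟩
    · rintro ⟨⟨η, hη⟩, ζ, hζ⟩
      have hpξ : p ξ = ξ := by rw [← hη, ← ContinuousLinearMap.mul_apply, hp.1.eq]
      have haξ : a ξ = ξ := by rw [← hζ, ← ContinuousLinearMap.mul_apply, ha.1.eq]
      exact ⟨ξ, by rw [ContinuousLinearMap.mul_apply, haξ, hpξ]⟩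
  exact proj_ext hm.1 hproj (hm.2.trans hrange.symm)

end Aux

/-- base case of the inductive commutation argument for the infinite line
graph: for any quantum automorphism `(H, u)` of `L`, one has the orthogonal decomposition
`u_{1,1} + u_{1,−1} = (u_{0,0} ∧ u_{1,1}) + (u_{0,0} ∧ u_{1,−1}) + (u_{2,0} ∧ u_{1,1}) +
(u_{2,0} ∧ u_{1,−1})`, and in particular `u_{0,0}` commutes with `u_{1,1}`, `u_{1,−1}`,
`u_{−1,1}` and `u_{−1,−1}`. -/
theorem stmt12 {H : Type*} [NormedAddCommGroup H] [InnerProductSpace ℂ H] [CompleteSpace H]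
    (u : ℤ → ℤ → H →L[ℂ] H) (hu : IsQuantumAut lineGraph u) :
    Commute (u 0 0) (u 1 1) ∧ Commute (u 0 0) (u 1 (-1)) ∧
    Commute (u 0 0) (u (-1) 1) ∧ Commute (u 0 0) (u (-1) (-1)) ∧
    (∀ m₁ m₂ m₃ m₄ : H →L[ℂ] H,
      IsMeetProj (u 0 0) (u 1 1) m₁ → IsMeetProj (u 0 0) (u 1 (-1)) m₂ →
      IsMeetProj (u 2 0) (u 1 1) m₃ → IsMeetProj (u 2 0) (u 1 (-1)) m₄ →
      u 1 1 + u 1 (-1) = m₁ + m₂ + m₃ + m₄) := by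
  have hprj : ∀ x y : ℤ, IsProjection (u x y) := hu.1.1
  have hsa : ∀ x y : ℤ, star (u x y) = u x y := fun x y => (hprj x y).2.star_eq
  -- vanishing products
  have z1 : u (-1) 1 * u 2 0 = 0 := uvanish hu (by omega)
  have z2 : u (-1) (-1) * u 2 0 = 0 := uvanish hu (by omega)
  have z3 : u 1 (-1) * u (-2) 0 = 0 := uvanish hu (by omega)
  have z4 : u 1 1 * u (-2) 0 = 0 := uvanish hu (by omega)
  have z5 : u 0 0 * u 2 0 = 0 := uvanish hu (by omega)
  have z6 : u 0 0 * u (-2) 0 = 0 := uvanish hu (by omega)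
  have z7 : u 3 1 * u 0 0 = 0 := uvanish hu (by omega)
  have z8 : u 3 (-1) * u 0 0 = 0 := uvanish hu (by omega)
  have z9 : u 2 0 * u 0 0 = 0 := uvanish hu (by omega)
  -- two-term decompositions
  have hA : u 1 1 = u 1 1 * u 0 0 + u 1 1 * u 2 0 :=
    colRight hu _ 0 0 2 (by omega) (fun z h1 h2 => uvanish hu (by omega))
  have hB : u 1 (-1) = u 1 (-1) * u 0 0 + u 1 (-1) * u 2 0 :=
    colRight hu _ 0 0 2 (by omega) (fun z h1 h2 => uvanish hu (by omega))
  have hA' : u (-1) 1 = u (-1) 1 * u 0 0 + u (-1) 1 * u (-2) 0 :=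
    colRight hu _ 0 0 (-2) (by omega) (fun z h1 h2 => uvanish hu (by omega))
  have hB' : u (-1) (-1) = u (-1) (-1) * u 0 0 + u (-1) (-1) * u (-2) 0 :=
    colRight hu _ 0 0 (-2) (by omega) (fun z h1 h2 => uvanish hu (by omega))
  have hP2 : u 0 0 = u 0 0 * u 1 1 + u 0 0 * u (-1) 1 :=
    colRight hu _ 1 1 (-1) (by omega) (fun z h1 h2 => uvanish hu (by omega))
  have hP3 : u 0 0 = u 0 0 * u 1 (-1) + u 0 0 * u (-1) (-1) :=
    colRight hu _ (-1) 1 (-1) (by omega) (fun z h1 h2 => uvanish hu (by omega))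
  have hQ1 : u 2 0 = u 2 0 * u 1 1 + u 2 0 * u 3 1 :=
    colRight hu _ 1 1 3 (by omega) (fun z h1 h2 => uvanish hu (by omega))
  have hQ2 : u 2 0 = u 2 0 * u 1 (-1) + u 2 0 * u 3 (-1) :=
    colRight hu _ (-1) 1 3 (by omega) (fun z h1 h2 => uvanish hu (by omega))
  -- reordered versions
  have hP2r : u 0 0 = u 0 0 * u (-1) 1 + u 0 0 * u 1 1 := by rw [add_comm]; exact hP2
  have hP3r : u 0 0 = u 0 0 * u (-1) (-1) + u 0 0 * u 1 (-1) := by rw [add_comm]; exact hP3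
  have hAr : u 1 1 = u 1 1 * u 2 0 + u 1 1 * u 0 0 := by rw [add_comm]; exact hA
  have hBr : u 1 (-1) = u 1 (-1) * u 2 0 + u 1 (-1) * u 0 0 := by rw [add_comm]; exact hB
  -- commutation relations
  have cpa : u 0 0 * u 1 1 = u 1 1 * u 0 0 :=
    key (hsa 0 0) (hsa 1 1) hA (h2aux hP2 z5 (by rw [mul_assoc, z1, mul_zero]))
  have cpb : u 0 0 * u 1 (-1) = u 1 (-1) * u 0 0 :=
    key (hsa 0 0) (hsa 1 (-1)) hB (h2aux hP3 z5 (by rw [mul_assoc, z2, mul_zero]))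
  have cpa' : u 0 0 * u (-1) 1 = u (-1) 1 * u 0 0 :=
    key (hsa 0 0) (hsa (-1) 1) hA' (h2aux hP2r z6 (by rw [mul_assoc, z4, mul_zero]))
  have cpb' : u 0 0 * u (-1) (-1) = u (-1) (-1) * u 0 0 :=
    key (hsa 0 0) (hsa (-1) (-1)) hB' (h2aux hP3r z6 (by rw [mul_assoc, z3, mul_zero]))
  have cqa : u 2 0 * u 1 1 = u 1 1 * u 2 0 :=
    key (hsa 2 0) (hsa 1 1) hAr (h2aux hQ1 z9 (by rw [mul_assoc, z7, mul_zero]))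
  have cqb : u 2 0 * u 1 (-1) = u 1 (-1) * u 2 0 :=
    key (hsa 2 0) (hsa 1 (-1)) hBr (h2aux hQ2 z9 (by rw [mul_assoc, z8, mul_zero]))
  refine ⟨cpa, cpb, cpa', cpb', ?_⟩
  intro m₁ m₂ m₃ m₄ hm₁ hm₂ hm₃ hm₄
  rw [meet_eq (hprj 0 0) (hprj 1 1) cpa hm₁, meet_eq (hprj 0 0) (hprj 1 (-1)) cpb hm₂,
      meet_eq (hprj 2 0) (hprj 1 1) cqa hm₃, meet_eq (hprj 2 0) (hprj 1 (-1)) cqb hm₄]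
  have ea : u 1 1 = u 0 0 * u 1 1 + u 2 0 * u 1 1 := by rw [cpa, cqa]; exact hA
  have eb : u 1 (-1) = u 0 0 * u 1 (-1) + u 2 0 * u 1 (-1) := by rw [cpb, cqb]; exact hB
  conv_lhs => rw [ea, eb]
  abel
end
end

section
/- Every quantum automorphism of the infinite line graph L (vertex set Z, edges between consecutive integers) is classical: for any quantum automorphism (H, u) of L, all projections u_{ij}, i,j ∈ Z, pairwise commute. -/
noncomputable section

section Aux

variable {H : Type*} [NormedAddCommGroup H] [InnerProductSpace ℂ H] [CompleteSpace H]
variable {u : ℤ → ℤ → H →L[ℂ] H}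

lemma qa_zero (hu : IsQuantumAut lineGraph u) {i j k l : ℤ}
    (h : ¬((i = k ↔ j = l) ∧ (|i - k| = 1 ↔ |j - l| = 1))) :
    u i j * u k l = 0 :=
  hu.2 i k j l h

lemma qa_sa (hu : IsQuantumAut lineGraph u) (i j : ℤ) : IsSelfAdjoint (u i j) :=
  (hu.1.1 i j).2

lemma swap_zero (hu : IsQuantumAut lineGraph u) {i j k l : ℤ}
    (h : u i j * u k l = 0) : u k l * u i j = 0 := by
  have : u k l * u i j = star (u i j * u k l) := by
    rw [star_mul, (qa_sa hu i j).star_eq, (qa_sa hu k l).star_eq]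
  rw [this, h, star_zero]

/-- Insert a row resolution of identity between two entries to show a product vanishes. -/
lemma insert_zero_row (hu : IsQuantumAut lineGraph u) {i j k l : ℤ} (i' : ℤ)
    (h : ∀ m, u i j * u i' m = 0 ∨ u i' m * u k l = 0) :
    u i j * u k l = 0 := by
  ext ξ
  have hs : HasSum (fun m => u i' m (u k l ξ)) (u k l ξ) := hu.1.2.2.2.1 i' (u k l ξ)
  have hs2 : HasSum (fun m => u i j (u i' m (u k l ξ))) (u i j (u k l ξ)) :=
    (u i j).hasSum hs
  have hz : ∀ m, u i j (u i' m (u k l ξ)) = 0 := by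
    intro m
    rcases h m with h0 | h0
    · have : (u i j * u i' m) (u k l ξ) = 0 := by rw [h0]; rfl
      simpa using this
    · have : u i' m (u k l ξ) = (u i' m * u k l) ξ := rfl
      rw [this, h0]
      simp
  have : HasSum (fun m : ℤ => (0 : H)) (u i j (u k l ξ)) := by
    simpa [hz] using hs2
  have h0 : u i j (u k l ξ) = 0 := this.unique hasSum_zero
  simpa using h0

/-- Insert a column resolution of identity between two entries to show a product vanishes. -/
lemma insert_zero_col (hu : IsQuantumAut lineGraph u) {i j k l : ℤ} (j' : ℤ)
    (h : ∀ m, u i j * u m j' = 0 ∨ u m j' * u k l = 0) :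
    u i j * u k l = 0 := by
  ext ξ
  have hs : HasSum (fun m => u m j' (u k l ξ)) (u k l ξ) := hu.1.2.2.2.2 j' (u k l ξ)
  have hs2 : HasSum (fun m => u i j (u m j' (u k l ξ))) (u i j (u k l ξ)) :=
    (u i j).hasSum hs
  have hz : ∀ m, u i j (u m j' (u k l ξ)) = 0 := by
    intro m
    rcases h m with h0 | h0
    · have : (u i j * u m j') (u k l ξ) = 0 := by rw [h0]; rfl
      simpa using this
    · have : u m j' (u k l ξ) = (u m j' * u k l) ξ := rfl
      rw [this, h0]
      simp
  have : HasSum (fun m : ℤ => (0 : H)) (u i j (u k l ξ)) := by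
    simpa [hz] using hs2
  have h0 : u i j (u k l ξ) = 0 := this.unique hasSum_zero
  simpa using h0

lemma lemA (hu : IsQuantumAut lineGraph u) :
    ∀ n : ℕ, ∀ i j k l : ℤ, k - i = n → (n : ℤ) < |j - l| → u i j * u k l = 0 := by
  intro n
  induction n with
  | zero =>
    intro i j k l hk habs
    apply qa_zero hu
    rintro ⟨h1, _⟩
    have hik : i = k := by omega
    have hjl : j = l := h1.mp hik
    rw [hjl] at habs
    simp at habs
  | succ n ih =>
    intro i j k l hk habs
    apply insert_zero_row hu (i + 1)
    intro m
    by_cases hm : |j - m| = 1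
    · right
      apply ih (i + 1) m k l (by omega)
      have ht := abs_sub_le j m l
      push_cast at habs
      omega
    · left
      apply qa_zero hu
      rintro ⟨h1, h2⟩
      by_cases hjm : j = m
      · have : i = i + 1 := h1.mpr hjm
        omega
      · have hl : |i - (i + 1)| = 1 := by simp
        exact hm (h2.mp hl)

lemma lemB (hu : IsQuantumAut lineGraph u) :
    ∀ n : ℕ, ∀ i j k l : ℤ, |j - l| = n → (n : ℤ) < |i - k| → u i j * u k l = 0 := by
  intro n
  induction n with
  | zero =>
    intro i j k l hjl habs
    apply qa_zero hu
    rintro ⟨h1, _⟩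
    have hjl' : j = l := by
      rcases abs_cases (j - l) with ⟨h1', _⟩ | ⟨h1', _⟩ <;> omega
    have hik : i = k := h1.mpr hjl'
    rw [hik] at habs
    simp at habs
  | succ n ih =>
    intro i j k l hjl habs
    have key : ∀ j' : ℤ, |j - j'| = 1 → |j' - l| = (n : ℤ) → u i j * u k l = 0 := by
      intro j' hjj' hj'l
      apply insert_zero_col hu j'
      intro m
      by_cases hm : |i - m| = 1
      · right
        apply ih m j' k l hj'l
        have ht := abs_sub_le i m k
        push_cast at habs
        omega
      · left
        apply qa_zero hu
        rintro ⟨h1, h2⟩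
        by_cases him : i = m
        · have hj : j = j' := h1.mp him
          rw [hj] at hjj'
          simp at hjj'
        · exact hm (h2.mpr hjj')
    rcases abs_cases (j - l) with ⟨h1, h2⟩ | ⟨h1, h2⟩
    · refine key (j - 1) (by simp) ?_
      rcases abs_cases (j - 1 - l) with ⟨h3, _⟩ | ⟨h3, _⟩ <;> push_cast at hjl ⊢ <;> omega
    · refine key (j + 1) (by simp) ?_
      rcases abs_cases (j + 1 - l) with ⟨h3, _⟩ | ⟨h3, _⟩ <;> push_cast at hjl ⊢ <;> omega

lemma qa_dist_zero (hu : IsQuantumAut lineGraph u) {i j k l : ℤ}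
    (h : |i - k| ≠ |j - l|) : u i j * u k l = 0 := by
  rcases lt_or_gt_of_ne h with hlt | hgt
  · -- |i - k| < |j - l|
    rcases le_or_gt i k with hik | hik
    · have h1 : |i - k| = k - i := by rw [abs_sub_comm]; exact abs_of_nonneg (by omega)
      have hn : k - i = ((k - i).toNat : ℤ) := by omega
      exact lemA hu (k - i).toNat i j k l hn (by omega)
    · have h1 : |i - k| = i - k := abs_of_nonneg (by omega)
      have hn : i - k = ((i - k).toNat : ℤ) := by omega
      have h2 : |l - j| = |j - l| := abs_sub_comm l j
      exact swap_zero hu (lemA hu (i - k).toNat k l i j hn (by omega))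
  · -- |j - l| < |i - k|
    have hn : |j - l| = ((|j - l|).toNat : ℤ) := by
      have := abs_nonneg (j - l); omega
    exact lemB hu (|j - l|).toNat i j k l hn (by omega)

/-- Expansion of `T` using row `x` of `u`, when only two terms survive (left version). -/
lemma expand_left (hu : IsQuantumAut lineGraph u) (x a b : ℤ) (hab : a ≠ b)
    (T : H →L[ℂ] H) (h : ∀ m, m ≠ a → m ≠ b → u x m * T = 0) :
    u x a * T + u x b * T = T := by
  ext ξ
  have hs : HasSum (fun m => u x m (T ξ)) (T ξ) := hu.1.2.2.2.1 x (T ξ)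
  have h2 : HasSum (fun m => u x m (T ξ)) (u x a (T ξ) + u x b (T ξ)) := by
    have hz : ∀ m ∉ ({a, b} : Finset ℤ), u x m (T ξ) = 0 := by
      intro m hm
      simp only [Finset.mem_insert, Finset.mem_singleton] at hm
      push_neg at hm
      have h0 : (u x m * T) ξ = 0 := by rw [h m hm.1 hm.2]; rfl
      simpa using h0
    have : HasSum (fun m => u x m (T ξ)) (∑ m ∈ ({a, b} : Finset ℤ), u x m (T ξ)) :=
      hasSum_sum_of_ne_finset_zero hz
    rwa [Finset.sum_pair hab] at this
  have := h2.unique hs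
  simpa using this

/-- Expansion of `T` using row `x` of `u`, when only two terms survive (right version). -/
lemma expand_right (hu : IsQuantumAut lineGraph u) (x a b : ℤ) (hab : a ≠ b)
    (T : H →L[ℂ] H) (h : ∀ m, m ≠ a → m ≠ b → T * u x m = 0) :
    T * u x a + T * u x b = T := by
  ext ξ
  have hs : HasSum (fun m => u x m ξ) ξ := hu.1.2.2.2.1 x ξ
  have hs2 : HasSum (fun m => T (u x m ξ)) (T ξ) := T.hasSum hs
  have h2 : HasSum (fun m => T (u x m ξ)) (T (u x a ξ) + T (u x b ξ)) := by
    have hz : ∀ m ∉ ({a, b} : Finset ℤ), T (u x m ξ) = 0 := by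
      intro m hm
      simp only [Finset.mem_insert, Finset.mem_singleton] at hm
      push_neg at hm
      have h0 : (T * u x m) ξ = 0 := by rw [h m hm.1 hm.2]; rfl
      simpa using h0
    have : HasSum (fun m => T (u x m ξ)) (∑ m ∈ ({a, b} : Finset ℤ), T (u x m ξ)) :=
      hasSum_sum_of_ne_finset_zero hz
    rwa [Finset.sum_pair hab] at this
  have := h2.unique hs2
  simpa using this

/-- The key algebraic argument. -/
lemma comm_core {p p' w w3 : H →L[ℂ] H}
    (hp : IsSelfAdjoint p) (hp' : IsSelfAdjoint p') (hw : IsSelfAdjoint w)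
    (f1 : p * p' = 0) (f2 : p * w3 = 0) (f3 : w * p' + w3 * p' = p')
    (f4 : p * w + p' * w = w) (f5 : w * p + w * p' = w) :
    p * w = w * p := by
  have pwp' : p * w * p' = 0 := by
    have hwp' : w * p' = p' - w3 * p' := eq_sub_of_add_eq f3
    calc p * w * p' = p * (w * p') := mul_assoc _ _ _
      _ = p * p' - p * (w3 * p') := by rw [hwp', mul_sub]
      _ = 0 := by rw [f1, ← mul_assoc, f2, zero_mul, sub_zero]
  have p'wp : p' * w * p = 0 := by
    have : p' * w * p = star (p * w * p') := by
      rw [star_mul, star_mul, hp.star_eq, hp'.star_eq, hw.star_eq, mul_assoc]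
    rw [this, pwp', star_zero]
  have e1 : p * w = p * w * p := by
    have h := congrArg (fun T => p * T) f5
    simp only [mul_add, ← mul_assoc] at h
    rw [pwp', add_zero] at h
    exact h.symm
  have e2 : w * p = p * w * p := by
    have h := congrArg (fun T => T * p) f4
    simp only [add_mul] at h
    rw [p'wp, add_zero] at h
    exact h.symm
  rw [e1, e2]

lemma comm_aux (hu : IsQuantumAut lineGraph u) {i j k l : ℤ}
    (hki : 0 < k - i) (hd : k - i = |j - l|) :
    u i j * u k l = u k l * u i j := by
  obtain ⟨d, rfl⟩ : ∃ d, l = j + d := ⟨l - j, by ring⟩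
  have habs : |d| = k - i := by
    rw [show j - (j + d) = -d by ring, abs_neg] at hd
    omega
  have hd0 : d ≠ 0 := by
    intro h
    rw [h, abs_zero] at habs
    omega
  have hik1 : |i - k| = k - i := by rw [abs_sub_comm]; exact abs_of_nonneg (by omega)
  have hki1 : |k - i| = k - i := abs_of_nonneg (by omega)
  have f1 : u i j * u i (j + 2 * d) = 0 := by
    apply qa_zero hu
    rintro ⟨h1, _⟩
    have := h1.mp rfl
    omega
  have f2 : u i j * u k (j + 3 * d) = 0 := by
    apply qa_dist_zero hu
    intro hc
    rcases abs_cases (j - (j + 3 * d)) with ⟨h1, _⟩ | ⟨h1, _⟩ <;>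
      rcases abs_cases d with ⟨h3, _⟩ | ⟨h3, _⟩ <;> omega
  have f3 : u k (j + d) * u i (j + 2 * d) + u k (j + 3 * d) * u i (j + 2 * d)
      = u i (j + 2 * d) := by
    apply expand_left hu k (j + d) (j + 3 * d) (by omega)
    intro m hm1 hm2
    apply qa_dist_zero hu
    intro hc
    rcases abs_cases (m - (j + 2 * d)) with ⟨h1, _⟩ | ⟨h1, _⟩ <;>
      rcases abs_cases d with ⟨h3, _⟩ | ⟨h3, _⟩ <;> omega
  have f4 : u i j * u k (j + d) + u i (j + 2 * d) * u k (j + d) = u k (j + d) := by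
    apply expand_left hu i j (j + 2 * d) (by omega)
    intro m hm1 hm2
    apply qa_dist_zero hu
    intro hc
    rcases abs_cases (m - (j + d)) with ⟨h1, _⟩ | ⟨h1, _⟩ <;>
      rcases abs_cases d with ⟨h3, _⟩ | ⟨h3, _⟩ <;> omega
  have f5 : u k (j + d) * u i j + u k (j + d) * u i (j + 2 * d) = u k (j + d) := by
    apply expand_right hu i j (j + 2 * d) (by omega)
    intro m hm1 hm2
    apply qa_dist_zero hu
    intro hc
    rcases abs_cases (j + d - m) with ⟨h1, _⟩ | ⟨h1, _⟩ <;>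
      rcases abs_cases d with ⟨h3, _⟩ | ⟨h3, _⟩ <;> omega
  exact comm_core (qa_sa hu i j) (qa_sa hu i (j + 2 * d)) (qa_sa hu k (j + d)) f1 f2 f3 f4 f5

end Aux

/-- every quantum automorphism of the infinite line graph is classical:
all its entries pairwise commute. -/
theorem stmt13 {H : Type*} [NormedAddCommGroup H] [InnerProductSpace ℂ H] [CompleteSpace H]
    (u : ℤ → ℤ → H →L[ℂ] H) (hu : IsQuantumAut lineGraph u) :
    ∀ i j k l : ℤ, Commute (u i j) (u k l) := by
  intro i j k l
  show u i j * u k l = u k l * u i j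
  by_cases hdist : |i - k| = |j - l|
  · rcases lt_trichotomy i k with hik | hik | hik
    · have h1 : |i - k| = k - i := by rw [abs_sub_comm]; exact abs_of_nonneg (by omega)
      exact comm_aux hu (by omega) (by omega)
    · subst hik
      have h0 : |j - l| = 0 := by simpa using hdist.symm
      have : j = l := by have := abs_eq_zero.mp h0; omega
      subst this
      rfl
    · have h1 : |i - k| = i - k := abs_of_nonneg (by omega)
      have h2 : |l - j| = |j - l| := abs_sub_comm l j
      exact (comm_aux hu (i := k) (j := l) (k := i) (l := j) (by omega) (by omega)).symm
  · rw [qa_dist_zero hu hdist,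
      qa_dist_zero hu (by rw [abs_sub_comm k i, abs_sub_comm l j]; exact hdist)]
end
end

section
/- Let X, Y be graphs and let u^X, u^Y be quantum automorphisms of X and Y respectively on the same Hilbert space H such that u^X_{x₁x₂} u^Y_{y₁y₂} = u^Y_{y₁y₂} u^X_{x₁x₂} for all vertices. Define w_{(x₁,y₁),(x₂,y₂)} = u^X_{x₁x₂} u^Y_{y₁y₂}. Then (H, w) is a quantum automorphism of the direct product graph X × Y: each w entry is a projection, rows and columns form partitions of unity, and w commutes with the adjacency matrix A_X ⊗ A_Y. -/
noncomputable section

/-- The direct (tensor/Kronecker) product `X × Y` of graphs: `(x₁,y₁)` and `(x₂,y₂)` are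
adjacent iff `x₁ ∼ x₂` and `y₁ ∼ y₂`; its adjacency matrix is `A_X ⊗ A_Y`. -/
def directProd {V W : Type*} (G : SimpleGraph V) (G' : SimpleGraph W) :
    SimpleGraph (V × W) where
  Adj a b := G.Adj a.1 b.1 ∧ G'.Adj a.2 b.2
  symm := ⟨fun a b h => ⟨h.1.symm, h.2.symm⟩⟩
  loopless := ⟨fun a h => G.loopless.irrefl a.1 h.1⟩

section Aux

open scoped InnerProductSpace

variable {H : Type*} [NormedAddCommGroup H] [InnerProductSpace ℂ H] [CompleteSpace H]

/-- For a projection, `‖p ξ‖² = re ⟪ξ, p ξ⟫`. -/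
lemma proj_norm_sq {p : H →L[ℂ] H} (hp : IsProjection p) (ξ : H) :
    ‖p ξ‖ ^ 2 = RCLike.re (⟪ξ, p ξ⟫_ℂ) := by
  have hadj : ContinuousLinearMap.adjoint p = p := by
    rw [← ContinuousLinearMap.star_eq_adjoint, hp.2.star_eq]
  have h1 : ⟪ξ, p ξ⟫_ℂ = ⟪p ξ, p ξ⟫_ℂ := by
    conv_lhs => rw [← hp.1.eq]
    rw [ContinuousLinearMap.mul_apply, ← ContinuousLinearMap.adjoint_inner_right, hadj]
  rw [h1, inner_self_eq_norm_sq]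

/-- Projection applied to a vector does not increase the norm. -/
lemma proj_norm_le {p : H →L[ℂ] H} (hp : IsProjection p) (ξ : H) :
    ‖p ξ‖ ≤ ‖ξ‖ := by
  rcases eq_or_lt_of_le (norm_nonneg (p ξ)) with h | h
  · rw [← h]; exact norm_nonneg ξ
  · have := proj_norm_sq hp ξ
    have h2 : RCLike.re (⟪ξ, p ξ⟫_ℂ) ≤ ‖ξ‖ * ‖p ξ‖ := by
      calc RCLike.re (⟪ξ, p ξ⟫_ℂ) ≤ ‖(⟪ξ, p ξ⟫_ℂ)‖ := RCLike.re_le_norm _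
        _ ≤ ‖ξ‖ * ‖p ξ‖ := norm_inner_le_norm _ _
    have h3 : ‖p ξ‖ * ‖p ξ‖ ≤ ‖ξ‖ * ‖p ξ‖ := by
      rw [← sq] at *; nlinarith [this, h2]
    exact le_of_mul_le_mul_right h3 h

/-- A finite sum of pairwise orthogonal projections is a projection. -/
lemma sum_proj {ι : Type*} (p : ι → H →L[ℂ] H) (hp : ∀ i, IsProjection (p i))
    (horth : ∀ i j, i ≠ j → p i * p j = 0) (s : Finset ι) :
    IsProjection (∑ i ∈ s, p i) := by
  classical
  induction s using Finset.induction with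
  | empty => simp [IsProjection, IsIdempotentElem]
  | @insert j s' hj ih =>
    rw [Finset.sum_insert hj]
    constructor
    · have hcross1 : p j * (∑ i ∈ s', p i) = 0 := by
        rw [Finset.mul_sum]
        refine Finset.sum_eq_zero fun i hi => horth j i ?_
        rintro rfl; exact hj hi
      have hcross2 : (∑ i ∈ s', p i) * p j = 0 := by
        rw [Finset.sum_mul]
        refine Finset.sum_eq_zero fun i hi => horth i j ?_
        rintro rfl; exact hj hi
      unfold IsIdempotentElem
      rw [add_mul, mul_add, mul_add, hcross1, hcross2, (hp j).1.eq, ih.1.eq]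
      abel
    · exact (hp j).2.add ih.2

/-- Pairwise orthogonal projections give summable families. -/
lemma summable_orth_proj {ι : Type*} (p : ι → H →L[ℂ] H) (hp : ∀ i, IsProjection (p i))
    (horth : ∀ i j, i ≠ j → p i * p j = 0) (ξ : H) :
    Summable (fun i => p i ξ) := by
  classical
  -- partial sums of norm squares
  have key : ∀ s : Finset ι, ∑ i ∈ s, ‖p i ξ‖ ^ 2 = ‖(∑ i ∈ s, p i) ξ‖ ^ 2 := by
    intro s
    rw [proj_norm_sq (sum_proj p hp horth s) ξ]
    rw [ContinuousLinearMap.sum_apply, inner_sum, map_sum]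
    exact Finset.sum_congr rfl fun i _ => proj_norm_sq (hp i) ξ
  have bound : ∀ s : Finset ι, ∑ i ∈ s, ‖p i ξ‖ ^ 2 ≤ ‖ξ‖ ^ 2 := by
    intro s
    rw [key s]
    have := proj_norm_le (sum_proj p hp horth s) ξ
    exact pow_le_pow_left₀ (norm_nonneg _) this 2
  have hsq : Summable (fun i => ‖p i ξ‖ ^ 2) :=
    summable_of_sum_le (fun i => sq_nonneg _) bound
  rw [summable_iff_vanishing_norm]
  intro ε hε
  obtain ⟨s, hs⟩ := summable_iff_vanishing_norm.1 hsq (ε ^ 2) (by positivity)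
  refine ⟨s, fun t ht => ?_⟩
  have h1 := hs t ht
  have h2 : ‖∑ i ∈ t, ‖p i ξ‖ ^ 2‖ = ∑ i ∈ t, ‖p i ξ‖ ^ 2 := by
    rw [Real.norm_eq_abs, abs_of_nonneg (Finset.sum_nonneg fun i _ => sq_nonneg _)]
  rw [h2] at h1
  have h3 : ‖∑ i ∈ t, p i ξ‖ ^ 2 < ε ^ 2 := by
    have h4 : (∑ i ∈ t, p i ξ) = (∑ i ∈ t, p i) ξ := by
      rw [ContinuousLinearMap.sum_apply]
    rw [h4, ← key t]; exact h1
  exact lt_of_pow_lt_pow_left₀ 2 (le_of_lt hε) h3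

/-- If the fiberwise sums converge to ξ via two orthogonal families, the product
family sums to ξ. -/
lemma hasSum_prod_proj {ι κ : Type*} (p : ι → H →L[ℂ] H) (q : κ → H →L[ℂ] H)
    (hp : ∀ i, IsProjection (p i)) (hq : ∀ i, IsProjection (q i))
    (hpo : ∀ i j, i ≠ j → p i * p j = 0) (hqo : ∀ i j, i ≠ j → q i * q j = 0)
    (hcomm : ∀ i j, Commute (p i) (q j)) (ξ : H)
    (hps : HasSum (fun i => p i ξ) ξ) (hqs : HasSum (fun j => q j ξ) ξ) :
    HasSum (fun z : ι × κ => (p z.1 * q z.2) ξ) ξ := by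
  set r : ι × κ → H →L[ℂ] H := fun z => p z.1 * q z.2 with hr
  have hrproj : ∀ z, IsProjection (r z) := by
    intro z
    constructor
    · show (p z.1 * q z.2) * (p z.1 * q z.2) = p z.1 * q z.2
      have : q z.2 * p z.1 = p z.1 * q z.2 := (hcomm z.1 z.2).symm
      calc (p z.1 * q z.2) * (p z.1 * q z.2) = p z.1 * (q z.2 * p z.1) * q z.2 := by noncomm_ring
        _ = p z.1 * (p z.1 * q z.2) * q z.2 := by rw [this]
        _ = (p z.1 * p z.1) * (q z.2 * q z.2) := by noncomm_ring
        _ = p z.1 * q z.2 := by rw [(hp z.1).1.eq, (hq z.2).1.eq]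
    · have h1 : star (p z.1 * q z.2) = star (q z.2) * star (p z.1) := star_mul _ _
      rw [IsSelfAdjoint, h1, (hp z.1).2.star_eq, (hq z.2).2.star_eq]
      exact (hcomm z.1 z.2).symm.eq
  have hrorth : ∀ z w : ι × κ, z ≠ w → r z * r w = 0 := by
    intro z w hzw
    have key : r z * r w = (p z.1 * p w.1) * (q z.2 * q w.2) := by
      show (p z.1 * q z.2) * (p w.1 * q w.2) = _
      have : q z.2 * p w.1 = p w.1 * q z.2 := (hcomm w.1 z.2).symm
      calc (p z.1 * q z.2) * (p w.1 * q w.2)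
          = p z.1 * (q z.2 * p w.1) * q w.2 := by noncomm_ring
        _ = p z.1 * (p w.1 * q z.2) * q w.2 := by rw [this]
        _ = (p z.1 * p w.1) * (q z.2 * q w.2) := by noncomm_ring
    rcases eq_or_ne z.1 w.1 with h1 | h1
    · have h2 : z.2 ≠ w.2 := by
        intro h2; exact hzw (Prod.ext h1 h2)
      rw [key, hqo _ _ h2, mul_zero]
    · rw [key, hpo _ _ h1, zero_mul]
  have hsummable : Summable (fun z : ι × κ => r z ξ) :=
    summable_orth_proj r hrproj hrorth ξ
  obtain ⟨a, ha⟩ := hsummable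
  have hfiber : ∀ i, HasSum (fun j => r (i, j) ξ) (p i ξ) := by
    intro i
    exact (p i).hasSum hqs
  have := ha.prod_fiberwise hfiber
  have haξ : a = ξ := this.unique hps
  rwa [haξ] at ha

end Aux

/-- if `u, v` are quantum automorphisms of `X`, `Y` on the same Hilbert space,
with pointwise commuting entries, then `w_{(x₁,y₁),(x₂,y₂)} = u_{x₁x₂} v_{y₁y₂}` is a quantum
automorphism of the direct product `X × Y`. -/
theorem stmt14 {V W H : Type*} [NormedAddCommGroup H] [InnerProductSpace ℂ H] [CompleteSpace H]
    (G : SimpleGraph V) (G' : SimpleGraph W)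
    (u : V → V → H →L[ℂ] H) (v : W → W → H →L[ℂ] H)
    (hu : IsQuantumAut G u) (hv : IsQuantumAut G' v)
    (hcomm : ∀ x₁ x₂ y₁ y₂, Commute (u x₁ x₂) (v y₁ y₂)) :
    IsQuantumAut (directProd G G')
      (fun a b : V × W => u a.1 b.1 * v a.2 b.2) := by
  obtain ⟨⟨huproj, hurow, hucol, hursum, hucsum⟩, huadj⟩ := hu
  obtain ⟨⟨hvproj, hvrow, hvcol, hvrsum, hvcsum⟩, hvadj⟩ := hv
  -- basic product rearrangement
  have key : ∀ (x₁ x₂ x₃ x₄ : V) (y₁ y₂ y₃ y₄ : W),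
      (u x₁ x₂ * v y₁ y₂) * (u x₃ x₄ * v y₃ y₄)
        = (u x₁ x₂ * u x₃ x₄) * (v y₁ y₂ * v y₃ y₄) := by
    intro x₁ x₂ x₃ x₄ y₁ y₂ y₃ y₄
    have h : v y₁ y₂ * u x₃ x₄ = u x₃ x₄ * v y₁ y₂ := (hcomm x₃ x₄ y₁ y₂).symm
    calc (u x₁ x₂ * v y₁ y₂) * (u x₃ x₄ * v y₃ y₄)
        = u x₁ x₂ * (v y₁ y₂ * u x₃ x₄) * v y₃ y₄ := by noncomm_ring
      _ = u x₁ x₂ * (u x₃ x₄ * v y₁ y₂) * v y₃ y₄ := by rw [h]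
      _ = (u x₁ x₂ * u x₃ x₄) * (v y₁ y₂ * v y₃ y₄) := by noncomm_ring
  have wproj : ∀ a b : V × W, IsProjection (u a.1 b.1 * v a.2 b.2) := by
    intro a b
    constructor
    · show (u a.1 b.1 * v a.2 b.2) * (u a.1 b.1 * v a.2 b.2) = _
      rw [key, (huproj a.1 b.1).1.eq, (hvproj a.2 b.2).1.eq]
    · rw [IsSelfAdjoint, star_mul, (huproj a.1 b.1).2.star_eq, (hvproj a.2 b.2).2.star_eq]
      exact (hcomm a.1 b.1 a.2 b.2).symm.eq
  refine ⟨⟨wproj, ?_, ?_, ?_, ?_⟩, ?_⟩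
  · -- row orthogonality
    intro x z z' hzz'
    simp only
    rw [key]
    rcases eq_or_ne z.1 z'.1 with h1 | h1
    · have h2 : z.2 ≠ z'.2 := fun h2 => hzz' (Prod.ext h1 h2)
      rw [hvrow _ _ _ h2, mul_zero]
    · rw [hurow _ _ _ h1, zero_mul]
  · -- column orthogonality
    intro y z z' hzz'
    simp only
    rw [key]
    rcases eq_or_ne z.1 z'.1 with h1 | h1
    · have h2 : z.2 ≠ z'.2 := fun h2 => hzz' (Prod.ext h1 h2)
      rw [hvcol _ _ _ h2, mul_zero]
    · rw [hucol _ _ _ h1, zero_mul]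
  · -- row sums
    intro x ξ
    exact hasSum_prod_proj (fun z => u x.1 z) (fun z => v x.2 z)
      (fun i => huproj x.1 i) (fun i => hvproj x.2 i)
      (fun i j h => hurow x.1 i j h) (fun i j h => hvrow x.2 i j h)
      (fun i j => hcomm x.1 i x.2 j) ξ (hursum x.1 ξ) (hvrsum x.2 ξ)
  · -- column sums
    intro y ξ
    exact hasSum_prod_proj (fun z => u z y.1) (fun z => v z y.2)
      (fun i => huproj i y.1) (fun i => hvproj i y.2)
      (fun i j h => hucol y.1 i j h) (fun i j h => hvcol y.2 i j h)
      (fun i j => hcomm i y.1 j y.2) ξ (hucsum y.1 ξ) (hvcsum y.2 ξ)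
  · -- adjacency condition
    intro a₁ a₂ b₁ b₂ hrel
    simp only
    rw [key]
    by_cases hU : (a₁.1 = a₂.1 ↔ b₁.1 = b₂.1) ∧ (G.Adj a₁.1 a₂.1 ↔ G.Adj b₁.1 b₂.1)
    · by_cases hV : (a₁.2 = a₂.2 ↔ b₁.2 = b₂.2) ∧ (G'.Adj a₁.2 a₂.2 ↔ G'.Adj b₁.2 b₂.2)
      · exfalso
        apply hrel
        constructor
        · constructor
          · intro h
            exact Prod.ext (hU.1.1 (by rw [h])) (hV.1.1 (by rw [h]))
          · intro h
            exact Prod.ext (hU.1.2 (by rw [h])) (hV.1.2 (by rw [h]))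
        · show (G.Adj a₁.1 a₂.1 ∧ G'.Adj a₁.2 a₂.2) ↔ (G.Adj b₁.1 b₂.1 ∧ G'.Adj b₁.2 b₂.2)
          rw [hU.2, hV.2]
      · rw [hvadj _ _ _ _ hV, mul_zero]
    · rw [huadj _ _ _ _ hU, zero_mul]
end
end

section
/- Let X be a connected graph, I a set, and u a finite dimensional quantum automorphism of the disjoint union ⋃_{i∈I} X (vertices denoted x_i for x ∈ V_X, i ∈ I). Fix x ∈ V_X and define g(u)^I_{ij} = Σ_{v∈V_X} u_{x_i, v_j}. Then: (a) g(u)^I_{ij} is independent of the choice of x; (b) each g(u)^I_{ij} is a projection; (c) (g(u)^I_{ij})_{i,j∈I} is a quantum permutation of I; (d) for all w, y ∈ V_X, u_{w_i, y_j} g(u)^I_{ij} = u_{w_i, y_j} = g(u)^I_{ij} u_{w_i, y_j}. -/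
noncomputable section

/-- The disjoint union `⋃_{i ∈ I} X` of copies of a graph `X` indexed by `I`: vertex set
`V_X × I`, with `x_i ∼ y_j` iff `i = j` and `x ∼ y` in `X`. -/
def disjointUnion {V : Type*} (G : SimpleGraph V) (I : Type*) : SimpleGraph (V × I) where
  Adj a b := a.2 = b.2 ∧ G.Adj a.1 b.1
  symm := ⟨fun a b h => ⟨h.1.symm, h.2.symm⟩⟩
  loopless := ⟨fun a h => G.loopless.irrefl a.1 h.2⟩

open scoped InnerProductSpace

namespace Stmt15Aux

variable {V I H : Type*} [NormedAddCommGroup H] [InnerProductSpace ℂ H] [CompleteSpace H]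
  [FiniteDimensional ℂ H]

/-- A pairwise orthogonal family of projections on a finite dimensional Hilbert space has
finite support. -/
lemma finite_support_of_orth {X : Type*} (p : X → H →L[ℂ] H)
    (hidem : ∀ b, IsIdempotentElem (p b)) (hsa : ∀ b, IsSelfAdjoint (p b))
    (h0 : ∀ b b', b ≠ b' → p b * p b' = 0) : {b | p b ≠ 0}.Finite := by
  rw [← Set.finite_coe_iff]
  have hvec : ∀ b : {b | p b ≠ 0}, ∃ ξ : H, p b.1 ξ = ξ ∧ ‖ξ‖ = 1 := by
    rintro ⟨b, hb⟩
    have hb' : p b ≠ 0 := hb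
    obtain ⟨η, hη⟩ : ∃ η, p b η ≠ 0 := by
      by_contra h
      push_neg at h
      exact hb' (ContinuousLinearMap.ext fun η => by
        rw [h η, ContinuousLinearMap.zero_apply])
    refine ⟨((‖p b η‖ : ℂ))⁻¹ • p b η, ?_, ?_⟩
    · rw [map_smul]
      congr 1
      rw [← ContinuousLinearMap.mul_apply, hidem b]
    · rw [norm_smul, norm_inv, Complex.norm_real, norm_norm,
        inv_mul_cancel₀ (norm_ne_zero_iff.mpr hη)]
  choose f hf1 hf2 using hvec
  have horth : Orthonormal ℂ f := by
    refine ⟨hf2, ?_⟩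
    intro a b hab
    have hne : (a : X) ≠ (b : X) := fun h => hab (Subtype.ext h)
    calc ⟪f a, f b⟫_ℂ = ⟪p a.1 (f a), f b⟫_ℂ := by rw [hf1]
      _ = ⟪f a, p a.1 (f b)⟫_ℂ := (hsa a.1).isSymmetric _ _
      _ = ⟪f a, p a.1 (p b.1 (f b))⟫_ℂ := by rw [hf1]
      _ = ⟪f a, (p a.1 * p b.1) (f b)⟫_ℂ := by rw [ContinuousLinearMap.mul_apply]
      _ = 0 := by rw [h0 a.1 b.1 hne, ContinuousLinearMap.zero_apply, inner_zero_right]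
  exact horth.linearIndependent.finite

/-- The main workhorse: all the "row" statements for a quantum automorphism of a disjoint
union of copies of a connected graph. -/
lemma key {G : SimpleGraph V} (hG : G.Connected)
    (u : V × I → V × I → H →L[ℂ] H) (hu : IsQuantumAut (disjointUnion G I) u) :
    (∀ (x x' : V) (i j : I),
      (∑' v : V, u (x, i) (v, j)) = ∑' v : V, u (x', i) (v, j)) ∧
    (∀ (x : V) (i j : I), IsProjection (∑' v : V, u (x, i) (v, j))) ∧
    (∀ (x : V) (i j j' : I), j ≠ j' →
      (∑' v : V, u (x, i) (v, j)) * (∑' v : V, u (x, i) (v, j')) = 0) ∧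
    (∀ (x : V) (i : I) (ξ : H), HasSum (fun j : I => (∑' v : V, u (x, i) (v, j)) ξ) ξ) ∧
    (∀ (x w y : V) (i j : I),
      u (w, i) (y, j) * (∑' v : V, u (x, i) (v, j)) = u (w, i) (y, j)) ∧
    (∀ (x w y : V) (i j : I),
      (∑' v : V, u (x, i) (v, j)) * u (w, i) (y, j) = u (w, i) (y, j)) ∧
    (∀ (x : V) (i j : I) (q : H →L[ℂ] H),
      (∀ v : V, q * u (x, i) (v, j) = u (x, i) (v, j)) →
      q * (∑' v : V, u (x, i) (v, j)) = ∑' v : V, u (x, i) (v, j)) ∧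
    (∀ (x : V) (i j : I) (q : H →L[ℂ] H),
      (∀ v : V, u (x, i) (v, j) * q = u (x, i) (v, j)) →
      (∑' v : V, u (x, i) (v, j)) * q = ∑' v : V, u (x, i) (v, j)) := by
  classical
  obtain ⟨⟨hp, hr0, hc0, hrs, hcs⟩, hadj⟩ := hu
  -- finiteness of the rows
  have rowFin : ∀ a : V × I, {b : V × I | u a b ≠ 0}.Finite := fun a =>
    finite_support_of_orth (u a) (fun b => (hp a b).1) (fun b => (hp a b).2) (hr0 a)
  set R : V × I → Finset (V × I) := fun a => (rowFin a).toFinset with hRdef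
  have hRzero : ∀ (a b : V × I), b ∉ R a → u a b = 0 := by
    intro a b hb
    by_contra h
    exact hb ((rowFin a).mem_toFinset.mpr h)
  -- the basic finite-sum representation of the tsum
  have hTsum : ∀ (x : V) (i j : I),
      (∑' v : V, u (x, i) (v, j)) =
        ∑ b ∈ R (x, i), (if b.2 = j then u (x, i) b else 0) := by
    intro x i j
    have hinj : Function.Injective (fun v : V => ((v, j) : V × I)) := fun a b hab =>
      (Prod.ext_iff.mp hab).1
    have hsupp : Function.support (fun b : V × I => if b.2 = j then u (x, i) b else 0) ⊆
        Set.range fun v : V => ((v, j) : V × I) := by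
      intro b hb
      by_cases hbj : b.2 = j
      · exact ⟨b.1, by simp [← hbj]⟩
      · simp only [Function.mem_support, if_neg hbj, ne_eq, not_true_eq_false] at hb
    have h2 := hinj.tsum_eq (f := fun b : V × I => if b.2 = j then u (x, i) b else 0) hsupp
    have h3 : (∑' v : V, u (x, i) (v, j)) =
        ∑' v : V, (if ((v, j) : V × I).2 = j then u (x, i) (v, j) else 0) := by
      refine tsum_congr fun v => ?_
      rw [if_pos rfl]
    rw [h3, h2]
    refine tsum_eq_sum fun b hb => ?_
    rw [hRzero _ b hb]
    exact ite_self 0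
  -- rows of u sum to 1 as operators
  have hrow1 : ∀ a : V × I, (∑ b ∈ R a, u a b) = 1 := by
    intro a
    ext ξ
    rw [ContinuousLinearMap.sum_apply, ContinuousLinearMap.one_apply]
    refine HasSum.unique ?_ (hrs a ξ)
    exact hasSum_sum_of_ne_finset_zero fun b hb => by
      rw [hRzero a b hb, ContinuousLinearMap.zero_apply]
  -- local absorption (base point = w)
  have hdL : ∀ (w y : V) (i j : I),
      u (w, i) (y, j) * (∑' v : V, u (w, i) (v, j)) = u (w, i) (y, j) := by
    intro w y i j
    rw [hTsum, Finset.mul_sum]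
    have := Finset.sum_eq_single (s := R (w, i))
      (f := fun b => u (w, i) (y, j) * (if b.2 = j then u (w, i) b else 0)) ((y, j) : V × I)
      (fun b _ hbne => by
        by_cases hbj : b.2 = j
        · rw [if_pos hbj, hr0 (w, i) (y, j) b (Ne.symm hbne)]
        · rw [if_neg hbj, mul_zero])
      (fun hnm => by
        dsimp only
        rw [hRzero _ _ hnm, if_pos rfl, mul_zero])
    rw [this]
    dsimp only
    rw [if_pos rfl, (hp (w, i) (y, j)).1]
  have hdR : ∀ (w y : V) (i j : I),
      (∑' v : V, u (w, i) (v, j)) * u (w, i) (y, j) = u (w, i) (y, j) := by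
    intro w y i j
    rw [hTsum, Finset.sum_mul]
    have := Finset.sum_eq_single (s := R (w, i))
      (f := fun b => (if b.2 = j then u (w, i) b else 0) * u (w, i) (y, j)) ((y, j) : V × I)
      (fun b _ hbne => by
        by_cases hbj : b.2 = j
        · rw [if_pos hbj, hr0 (w, i) b (y, j) hbne]
        · rw [if_neg hbj, zero_mul])
      (fun hnm => by
        dsimp only
        rw [hRzero _ _ hnm, if_pos rfl, zero_mul])
    rw [this]
    dsimp only
    rw [if_pos rfl, (hp (w, i) (y, j)).1]
  -- killing lemmas coming from adjacency of distinct base points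
  have hkill1 : ∀ (x x' : V) (i j : I), G.Adj x x' → ∀ (b : V × I) (w : V), b.2 ≠ j →
      u (x, i) b * u (x', i) (w, j) = 0 := by
    intro x x' i j hxx' b w hbj
    refine hadj (x, i) (x', i) b (w, j) ?_
    rintro ⟨-, h2⟩
    have h3 : (disjointUnion G I).Adj b (w, j) := h2.mp ⟨rfl, hxx'⟩
    have h4 : b.2 = ((w, j) : V × I).2 ∧ G.Adj b.1 (w, j).1 := h3
    exact hbj h4.1
  have hkill2 : ∀ (x x' : V) (i j : I), G.Adj x x' → ∀ (b : V × I) (v : V), b.2 ≠ j →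
      u (x, i) (v, j) * u (x', i) b = 0 := by
    intro x x' i j hxx' b v hbj
    refine hadj (x, i) (x', i) (v, j) b ?_
    rintro ⟨-, h2⟩
    have h3 : (disjointUnion G I).Adj (v, j) b := h2.mp ⟨rfl, hxx'⟩
    have h4 : ((v, j) : V × I).2 = b.2 ∧ G.Adj ((v, j) : V × I).1 b.1 := h3
    exact hbj h4.1.symm
  -- absorption across an edge
  have hsub1 : ∀ (x x' : V) (i j : I), G.Adj x x' → ∀ w : V,
      (∑' v : V, u (x, i) (v, j)) * u (x', i) (w, j) = u (x', i) (w, j) := by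
    intro x x' i j hxx' w
    calc (∑' v : V, u (x, i) (v, j)) * u (x', i) (w, j)
        = ∑ b ∈ R (x, i), (if b.2 = j then u (x, i) b else 0) * u (x', i) (w, j) := by
          rw [hTsum, Finset.sum_mul]
      _ = ∑ b ∈ R (x, i), u (x, i) b * u (x', i) (w, j) := by
          refine Finset.sum_congr rfl fun b _ => ?_
          by_cases hbj : b.2 = j
          · rw [if_pos hbj]
          · rw [if_neg hbj, zero_mul, hkill1 x x' i j hxx' b w hbj]
      _ = (∑ b ∈ R (x, i), u (x, i) b) * u (x', i) (w, j) := (Finset.sum_mul _ _ _).symm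
      _ = u (x', i) (w, j) := by rw [hrow1 (x, i), one_mul]
  have hsub2 : ∀ (x x' : V) (i j : I), G.Adj x x' → ∀ v : V,
      u (x, i) (v, j) * (∑' w : V, u (x', i) (w, j)) = u (x, i) (v, j) := by
    intro x x' i j hxx' v
    calc u (x, i) (v, j) * (∑' w : V, u (x', i) (w, j))
        = ∑ b ∈ R (x', i), u (x, i) (v, j) * (if b.2 = j then u (x', i) b else 0) := by
          rw [hTsum, Finset.mul_sum]
      _ = ∑ b ∈ R (x', i), u (x, i) (v, j) * u (x', i) b := by
          refine Finset.sum_congr rfl fun b _ => ?_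
          by_cases hbj : b.2 = j
          · rw [if_pos hbj]
          · rw [if_neg hbj, mul_zero, hkill2 x x' i j hxx' b v hbj]
      _ = u (x, i) (v, j) * (∑ b ∈ R (x', i), u (x', i) b) := (Finset.mul_sum _ _ _).symm
      _ = u (x, i) (v, j) := by rw [hrow1 (x', i), mul_one]
  -- base-point independence across an edge
  have hstep : ∀ (x x' : V) (i j : I), G.Adj x x' →
      (∑' v : V, u (x, i) (v, j)) = ∑' v : V, u (x', i) (v, j) := by
    intro x x' i j hxx'
    have h1 : (∑' v : V, u (x, i) (v, j)) * (∑' v : V, u (x', i) (v, j)) =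
        ∑' v : V, u (x', i) (v, j) := by
      conv_lhs => rw [hTsum x' i j, Finset.mul_sum]
      rw [hTsum x' i j]
      refine Finset.sum_congr rfl fun b _ => ?_
      by_cases hbj : b.2 = j
      · obtain ⟨b1, b2⟩ := b
        dsimp only at hbj
        subst hbj
        rw [if_pos rfl, hsub1 x x' i b2 hxx' b1]
      · rw [if_neg hbj, mul_zero]
    have h2 : (∑' v : V, u (x, i) (v, j)) * (∑' v : V, u (x', i) (v, j)) =
        ∑' v : V, u (x, i) (v, j) := by
      conv_lhs => rw [hTsum x i j, Finset.sum_mul]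
      rw [hTsum x i j]
      refine Finset.sum_congr rfl fun b _ => ?_
      by_cases hbj : b.2 = j
      · obtain ⟨b1, b2⟩ := b
        dsimp only at hbj
        subst hbj
        rw [if_pos rfl, hsub2 x x' i b2 hxx' b1]
      · rw [if_neg hbj, zero_mul]
    exact h2.symm.trans h1
  -- (a) base-point independence
  have hindep : ∀ (x x' : V) (i j : I),
      (∑' v : V, u (x, i) (v, j)) = ∑' v : V, u (x', i) (v, j) := by
    intro x x' i j
    obtain ⟨p⟩ := hG.preconnected x x'
    induction p with
    | nil => rfl
    | cons h q ih => exact (hstep _ _ i j h).trans ih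
  -- (b) projections
  have hproj : ∀ (x : V) (i j : I), IsProjection (∑' v : V, u (x, i) (v, j)) := by
    intro x i j
    constructor
    · show (∑' v : V, u (x, i) (v, j)) * (∑' v : V, u (x, i) (v, j)) =
        ∑' v : V, u (x, i) (v, j)
      rw [hTsum, Finset.sum_mul_sum]
      refine Finset.sum_congr rfl fun b hb => ?_
      refine Finset.sum_eq_single_of_mem b hb ?_ |>.trans ?_
      · intro b' _ hb'ne
        by_cases hbj : b.2 = j
        · by_cases hb'j : b'.2 = j
          · rw [if_pos hbj, if_pos hb'j, hr0 (x, i) b b' (Ne.symm hb'ne)]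
          · rw [if_neg hb'j, mul_zero]
        · rw [if_neg hbj, zero_mul]
      · by_cases hbj : b.2 = j
        · rw [if_pos hbj, (hp (x, i) b).1]
        · rw [if_neg hbj, zero_mul]
    · show star (∑' v : V, u (x, i) (v, j)) = ∑' v : V, u (x, i) (v, j)
      rw [hTsum, star_sum]
      refine Finset.sum_congr rfl fun b _ => ?_
      by_cases hbj : b.2 = j
      · rw [if_pos hbj]
        exact (hp (x, i) b).2
      · rw [if_neg hbj]
        exact star_zero _
  -- row orthogonality
  have hrowOrth : ∀ (x : V) (i j j' : I), j ≠ j' →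
      (∑' v : V, u (x, i) (v, j)) * (∑' v : V, u (x, i) (v, j')) = 0 := by
    intro x i j j' hjj'
    rw [hTsum x i j, hTsum x i j', Finset.sum_mul_sum]
    refine Finset.sum_eq_zero fun b _ => Finset.sum_eq_zero fun b' _ => ?_
    by_cases hbj : b.2 = j
    · by_cases hb'j : b'.2 = j'
      · rw [if_pos hbj, if_pos hb'j]
        refine hr0 (x, i) b b' fun h => ?_
        rw [h, hb'j] at hbj
        exact hjj' hbj.symm
      · rw [if_neg hb'j, mul_zero]
    · rw [if_neg hbj, zero_mul]
  -- row sums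
  have hrowSum : ∀ (x : V) (i : I) (ξ : H),
      HasSum (fun j : I => (∑' v : V, u (x, i) (v, j)) ξ) ξ := by
    intro x i ξ
    set J : Finset I := (R (x, i)).image Prod.snd with hJ
    have hz : ∀ j ∉ J, (∑' v : V, u (x, i) (v, j)) = 0 := by
      intro j hj
      rw [hTsum]
      refine Finset.sum_eq_zero fun b hb => ?_
      rw [if_neg fun hbj => hj (Finset.mem_image.mpr ⟨b, hb, hbj⟩)]
    have hsum : (∑ j ∈ J, ∑' v : V, u (x, i) (v, j)) = 1 := by
      calc (∑ j ∈ J, ∑' v : V, u (x, i) (v, j))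
          = ∑ j ∈ J, ∑ b ∈ R (x, i), (if b.2 = j then u (x, i) b else 0) :=
            Finset.sum_congr rfl fun j _ => hTsum x i j
        _ = ∑ b ∈ R (x, i), ∑ j ∈ J, (if b.2 = j then u (x, i) b else 0) := Finset.sum_comm
        _ = ∑ b ∈ R (x, i), u (x, i) b := by
            refine Finset.sum_congr rfl fun b hb => ?_
            rw [Finset.sum_ite_eq J b.2 (fun _ => u (x, i) b),
              if_pos (Finset.mem_image.mpr ⟨b, hb, rfl⟩)]
        _ = 1 := hrow1 (x, i)
    have h := hasSum_sum_of_ne_finset_zero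
      (f := fun j : I => (∑' v : V, u (x, i) (v, j)) ξ) (s := J) (L := SummationFilter.unconditional I)
      (fun j hj => by rw [hz j hj, ContinuousLinearMap.zero_apply])
    rwa [← ContinuousLinearMap.sum_apply, hsum, ContinuousLinearMap.one_apply] at h
  -- general absorption
  have habsL : ∀ (x w y : V) (i j : I),
      u (w, i) (y, j) * (∑' v : V, u (x, i) (v, j)) = u (w, i) (y, j) := by
    intro x w y i j
    rw [hindep x w i j]
    exact hdL w y i j
  have habsR : ∀ (x w y : V) (i j : I),
      (∑' v : V, u (x, i) (v, j)) * u (w, i) (y, j) = u (w, i) (y, j) := by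
    intro x w y i j
    rw [hindep x w i j]
    exact hdR w y i j
  -- generic absorption lemmas
  have hmulT : ∀ (x : V) (i j : I) (q : H →L[ℂ] H),
      (∀ v : V, q * u (x, i) (v, j) = u (x, i) (v, j)) →
      q * (∑' v : V, u (x, i) (v, j)) = ∑' v : V, u (x, i) (v, j) := by
    intro x i j q hq
    conv_lhs => rw [hTsum x i j, Finset.mul_sum]
    rw [hTsum x i j]
    refine Finset.sum_congr rfl fun b _ => ?_
    by_cases hbj : b.2 = j
    · obtain ⟨b1, b2⟩ := b
      dsimp only at hbj
      subst hbj
      rw [if_pos rfl, hq b1]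
    · rw [if_neg hbj, mul_zero]
  have hTmul : ∀ (x : V) (i j : I) (q : H →L[ℂ] H),
      (∀ v : V, u (x, i) (v, j) * q = u (x, i) (v, j)) →
      (∑' v : V, u (x, i) (v, j)) * q = ∑' v : V, u (x, i) (v, j) := by
    intro x i j q hq
    conv_lhs => rw [hTsum x i j, Finset.sum_mul]
    rw [hTsum x i j]
    refine Finset.sum_congr rfl fun b _ => ?_
    by_cases hbj : b.2 = j
    · obtain ⟨b1, b2⟩ := b
      dsimp only at hbj
      subst hbj
      rw [if_pos rfl, hq b1]
    · rw [if_neg hbj, zero_mul]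
  exact ⟨hindep, hproj, hrowOrth, hrowSum, habsL, habsR, hmulT, hTmul⟩

end Stmt15Aux

/-- let `X` be a connected graph and `u` a finite dimensional quantum
automorphism of `⋃_{i∈I} X`.  With `g(u)^I_{ij} = Σ_{v} u_{x_i, v_j}`: (a) the sum is
independent of the base point `x`; (b) each `g(u)^I_{ij}` is a projection; (c) `g(u)^I` is a
quantum permutation of `I`; (d) `u_{w_i, y_j} g(u)^I_{ij} = u_{w_i, y_j} = g(u)^I_{ij} u_{w_i, y_j}`. -/
theorem stmt15 {V I H : Type*} [NormedAddCommGroup H] [InnerProductSpace ℂ H] [CompleteSpace H]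
    [FiniteDimensional ℂ H]
    (G : SimpleGraph V) (hG : G.Connected)
    (u : V × I → V × I → H →L[ℂ] H) (hu : IsQuantumAut (disjointUnion G I) u) :
    (∀ (x x' : V) (i j : I),
      (∑' v : V, u (x, i) (v, j)) = ∑' v : V, u (x', i) (v, j)) ∧
    (∀ (x : V) (i j : I), IsProjection (∑' v : V, u (x, i) (v, j))) ∧
    (∀ x : V, IsQuantumPermutation (fun i j : I => ∑' v : V, u (x, i) (v, j))) ∧
    (∀ (x w y : V) (i j : I),
      u (w, i) (y, j) * (∑' v : V, u (x, i) (v, j)) = u (w, i) (y, j) ∧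
      (∑' v : V, u (x, i) (v, j)) * u (w, i) (y, j) = u (w, i) (y, j)) := by
  -- the transposed quantum automorphism
  set u' : V × I → V × I → H →L[ℂ] H := fun a b => u b a with hu'def
  have hu' : IsQuantumAut (disjointUnion G I) u' := by
    obtain ⟨⟨hp, hr0, hc0, hrs, hcs⟩, hadj⟩ := hu
    refine ⟨⟨fun a b => hp b a, fun a z z' h => hc0 a z z' h, fun b z z' h => hr0 b z z' h,
      fun a ξ => hcs a ξ, fun b ξ => hrs b ξ⟩, ?_⟩
    intro a₁ a₂ b₁ b₂ h
    refine hadj b₁ b₂ a₁ a₂ ?_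
    rintro ⟨h1, h2⟩
    exact h ⟨h1.symm, h2.symm⟩
  obtain ⟨k1, k2, k3, k4, k5, k6, k7, k8⟩ := Stmt15Aux.key hG u hu
  obtain ⟨k1', k2', k3', k4', k5', k6', k7', k8'⟩ := Stmt15Aux.key hG u' hu'
  -- the row and column sums agree
  have heq : ∀ (x : V) (i j : I),
      (∑' v : V, u (x, i) (v, j)) = ∑' v : V, u' (x, j) (v, i) := by
    intro x i j
    have h1 : (∑' v : V, u (x, i) (v, j)) * (∑' v : V, u' (x, j) (v, i)) =
        ∑' v : V, u' (x, j) (v, i) := by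
      refine k7' x j i (∑' v : V, u (x, i) (v, j)) fun v => ?_
      exact k6 x v x i j
    have h2 : (∑' v : V, u (x, i) (v, j)) * (∑' v : V, u' (x, j) (v, i)) =
        ∑' v : V, u (x, i) (v, j) := by
      refine k8 x i j (∑' v : V, u' (x, j) (v, i)) fun v => ?_
      exact k5' x v x j i
    exact h2.symm.trans h1
  refine ⟨k1, k2, ?_, fun x w y i j => ⟨k5 x w y i j, k6 x w y i j⟩⟩
  intro x
  refine ⟨fun i j => k2 x i j, fun i j j' h => k3 x i j j' h, ?_, fun i ξ => k4 x i ξ, ?_⟩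
  · intro j i i' h
    show (∑' v : V, u (x, i) (v, j)) * (∑' v : V, u (x, i') (v, j)) = 0
    rw [heq x i j, heq x i' j]
    exact k3' x j i i' h
  · intro j ξ
    have h := k4' x j ξ
    simp only [← heq x _ j] at h
    exact h
end
end

section
/- Let R be a countable graph with the extension property: for any pair of disjoint finite sets A, B of vertices there is a vertex w adjacent to every vertex of A and to no vertex of B (e.g. the Rado graph). Then R admits no non-classical finite dimensional quantum automorphism: for every quantum automorphism (H, u) of R with dim H < ∞, all projections u_{xy} pairwise commute. -/
noncomputable section

section Aux

variable {H : Type*} [NormedAddCommGroup H] [InnerProductSpace ℂ H] [CompleteSpace H]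

local notation "⟪" x ", " y "⟫" => @inner ℂ _ _ x y

lemma aux_support_finite [FiniteDimensional ℂ H] {ι : Type*} (f : ι → H →L[ℂ] H)
    (hidem : ∀ i, IsIdempotentElem (f i)) (hsa : ∀ i, IsSelfAdjoint (f i))
    (horth : ∀ i j, i ≠ j → f i * f j = 0) : {i | f i ≠ 0}.Finite := by
  rw [← Set.not_infinite]
  intro hinf
  have hvec : ∀ i : {i | f i ≠ 0}, ∃ ξ : H, f (i : ι) ξ = ξ ∧ ‖ξ‖ = 1 := by
    rintro ⟨i, hi⟩
    have hex : ∃ η, f i η ≠ 0 := by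
      by_contra h
      push_neg at h
      exact hi (ContinuousLinearMap.ext fun η => by simp [h η])
    obtain ⟨η, hη⟩ := hex
    refine ⟨(‖f i η‖ : ℂ)⁻¹ • f i η, ?_, ?_⟩
    · rw [map_smul]
      congr 1
      have h2 : (f i * f i) η = f i η := by rw [hidem i]
      simpa [ContinuousLinearMap.mul_apply] using h2
    · have h1 : ‖f i η‖ ≠ 0 := norm_ne_zero_iff.mpr hη
      rw [norm_smul, norm_inv, Complex.norm_real, norm_norm]
      exact inv_mul_cancel₀ h1
  choose ξ hξ hnξ using hvec
  have hon : Orthonormal ℂ ξ := by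
    refine ⟨hnξ, ?_⟩
    intro i j hij
    have hne : (i : ι) ≠ (j : ι) := fun h => hij (Subtype.ext h)
    have hadj : ContinuousLinearMap.adjoint (f (i : ι)) = f (i : ι) :=
      ContinuousLinearMap.isSelfAdjoint_iff'.mp (hsa i)
    calc ⟪ξ i, ξ j⟫ = ⟪f (i : ι) (ξ i), f (j : ι) (ξ j)⟫ := by rw [hξ i, hξ j]
      _ = ⟪ContinuousLinearMap.adjoint (f (i : ι)) (ξ i), f (j : ι) (ξ j)⟫ := by rw [hadj]
      _ = ⟪ξ i, f (i : ι) (f (j : ι) (ξ j))⟫ := by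
            rw [ContinuousLinearMap.adjoint_inner_left]
      _ = ⟪ξ i, (f (i : ι) * f (j : ι)) (ξ j)⟫ := rfl
      _ = 0 := by rw [horth _ _ hne]; simp
  have hli : LinearIndependent ℂ ξ := hon.linearIndependent
  have hfin : Finite {i | f i ≠ 0} := hli.finite
  exact hinf (Set.finite_coe_iff.mp hfin)

def trC [FiniteDimensional ℂ H] (f : H →L[ℂ] H) : ℂ := LinearMap.trace ℂ H (f : H →ₗ[ℂ] H)

set_option linter.unusedSectionVars false

lemma trC_mul_comm [FiniteDimensional ℂ H] (f g : H →L[ℂ] H) :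
    trC (f * g) = trC (g * f) := by
  unfold trC
  simp only [ContinuousLinearMap.mul_def, ContinuousLinearMap.coe_comp,
    ← Module.End.mul_eq_comp]
  exact LinearMap.trace_mul_comm ℂ _ _

lemma trC_add [FiniteDimensional ℂ H] (f g : H →L[ℂ] H) :
    trC (f + g) = trC f + trC g := by
  unfold trC
  rw [ContinuousLinearMap.coe_add]
  exact map_add _ _ _

lemma trC_sub [FiniteDimensional ℂ H] (f g : H →L[ℂ] H) :
    trC (f - g) = trC f - trC g := by
  unfold trC
  rw [ContinuousLinearMap.coe_sub]
  exact map_sub _ _ _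

lemma trC_formula [FiniteDimensional ℂ H] (f : H →L[ℂ] H) :
    trC f = ∑ i, ⟪(stdOrthonormalBasis ℂ H) i, f ((stdOrthonormalBasis ℂ H) i)⟫ := by
  set b := stdOrthonormalBasis ℂ H
  rw [trC, LinearMap.trace_eq_matrix_trace ℂ b.toBasis, Matrix.trace]
  refine Finset.sum_congr rfl fun i _ => ?_
  rw [Matrix.diag_apply, LinearMap.toMatrix_apply, b.coe_toBasis_repr_apply,
    b.repr_apply_apply, b.coe_toBasis]
  rfl

lemma aux_eq_zero_of_trace [FiniteDimensional ℂ H] (C : H →L[ℂ] H)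
    (h : trC (star C * C) = 0) : C = 0 := by
  set b := stdOrthonormalBasis ℂ H
  have hterm : ∀ i, ⟪b i, (star C * C) (b i)⟫ = ((‖C (b i)‖ ^ 2 : ℝ) : ℂ) := by
    intro i
    rw [ContinuousLinearMap.mul_apply, ContinuousLinearMap.star_eq_adjoint,
      ContinuousLinearMap.adjoint_inner_right, inner_self_eq_norm_sq_to_K]
    norm_cast
  rw [trC_formula] at h
  change ∑ i, ⟪b i, (star C * C) (b i)⟫ = 0 at h
  simp only [hterm] at h
  have hre : ∑ i, (‖C (b i)‖ : ℝ) ^ 2 = 0 := by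
    have h2 : ((∑ i, ‖C (b i)‖ ^ 2 : ℝ) : ℂ) = 0 := by exact_mod_cast h
    exact_mod_cast h2
  have hzero : ∀ i, C (b i) = 0 := by
    intro i
    have h0 := (Finset.sum_eq_zero_iff_of_nonneg
      (fun i _ => sq_nonneg (‖C (b i)‖))).mp hre i (Finset.mem_univ i)
    rw [sq_eq_zero_iff, norm_eq_zero] at h0
    exact h0
  have : (C : H →ₗ[ℂ] H) = (0 : H →L[ℂ] H) := by
    apply b.toBasis.ext
    intro i
    simp [b.coe_toBasis, hzero i]
  exact ContinuousLinearMap.coe_injective this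

lemma aux_main [FiniteDimensional ℂ H] (p p' q q' E : H →L[ℂ] H)
    (hpp : p * p = p) (hqq : q * q = q)
    (hpsa : IsSelfAdjoint p) (hqsa : IsSelfAdjoint q)
    (hpq' : p * q' = 0) (hq'p : q' * p = 0) (hqp' : q * p' = 0)
    (hqEp : q * E * p = q * p)
    (hP1E : (p + p') * E = E) (hP2E : (q' + q) * E = E) :
    p * q = q * p := by
  have hqE : q * E = E - q' * E := by
    have h := hP2E
    rw [add_mul] at h
    exact eq_sub_of_add_eq' h
  have e1 : p * q * p = p * E * p := by
    have h1 : p * (q * E) = p * E := by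
      rw [hqE, mul_sub, ← mul_assoc, hpq', zero_mul, sub_zero]
    calc p * q * p = p * (q * E * p) := by rw [hqEp, mul_assoc]
      _ = p * (q * E) * p := by rw [← mul_assoc]
      _ = p * E * p := by rw [h1]
  have hexp : (q' + q) * (p + p') = q' * p' + q * p := by
    rw [add_mul, mul_add, mul_add, hq'p, hqp', zero_add, add_zero]
  have hfact : (q' * p' + q * p) * E = E := by
    calc (q' * p' + q * p) * E = (q' + q) * (p + p') * E := by rw [hexp]
      _ = (q' + q) * ((p + p') * E) := by rw [mul_assoc]
      _ = (q' + q) * E := by rw [hP1E]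
      _ = E := hP2E
  have hfact2 : q' * p' * E + q * p * E = E := by
    rw [← add_mul]; exact hfact
  have hz : p * (q' * p' * E) = 0 := by
    rw [← mul_assoc, ← mul_assoc, hpq', zero_mul, zero_mul]
  have e2 : p * (q * p * E) * p = p * E * p := by
    calc p * (q * p * E) * p
        = (p * (q' * p' * E) + p * (q * p * E)) * p := by rw [hz, zero_add]
      _ = p * (q' * p' * E + q * p * E) * p := by rw [mul_add]
      _ = p * E * p := by rw [hfact2]
  have e2' : p * q * p * E * p = p * E * p := by
    calc p * q * p * E * p = p * (q * p * E) * p := by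
          rw [mul_assoc p q p, mul_assoc p (q * p) E]
      _ = p * E * p := e2
  have e3 : p * E * p * E * p = p * E * p := by
    conv_lhs => rw [← e1]
    exact e2'
  have t1 : trC (p * q * p) = trC (p * q) := by
    rw [trC_mul_comm (p * q) p, ← mul_assoc, hpp]
  have h4 : trC (p * E * p * E * p) = trC (p * E * p * E) := by
    rw [trC_mul_comm (p * E * p * E) p, ← mul_assoc, ← mul_assoc, ← mul_assoc, hpp]
  have t2 : trC (p * E * p * E) = trC (p * E * p) := by
    rw [← h4, e3]
  have t4 : trC (p * E * p) = trC (p * q) := by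
    rw [← e1, t1]
  have ha : p * q * (p * q) = p * E * p * q := by
    rw [← mul_assoc, e1]
  have t3 : trC (p * q * (p * q)) = trC (p * E * p) := by
    rw [ha, mul_assoc (p * E) p q, trC_mul_comm (p * E) (p * q), ← mul_assoc, e1]
    exact t2
  have hstar : star (p * q - q * p) = q * p - p * q := by
    rw [star_sub, star_mul, star_mul, hpsa.star_eq, hqsa.star_eq]
  have hA : q * p * (p * q) = q * p * q := by
    rw [mul_assoc q p (p * q), ← mul_assoc p p q, hpp, ← mul_assoc]
  have hB : p * q * (q * p) = p * q * p := by
    rw [mul_assoc p q (q * p), ← mul_assoc q q p, hqq, ← mul_assoc]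
  have hCC : star (p * q - q * p) * (p * q - q * p)
      = q * p * q + p * q * p - q * p * (q * p) - p * q * (p * q) := by
    rw [hstar, sub_mul, mul_sub, mul_sub, hA, hB]
    abel
  have hqpq : trC (q * p * q) = trC (p * q) := by
    rw [trC_mul_comm (q * p) q, ← mul_assoc, hqq, trC_mul_comm q p]
  have hqpqp : trC (q * p * (q * p)) = trC (p * q * (p * q)) := by
    calc trC (q * p * (q * p)) = trC (q * (p * (q * p))) := by rw [mul_assoc]
      _ = trC (p * (q * p) * q) := by rw [trC_mul_comm q (p * (q * p))]
      _ = trC (p * q * (p * q)) := by rw [← mul_assoc, mul_assoc (p * q) p q]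
  have htr : trC (star (p * q - q * p) * (p * q - q * p)) = 0 := by
    rw [hCC, trC_sub, trC_sub, trC_add, hqpq, t1, hqpqp, t3, t4]
    ring
  have h0 := aux_eq_zero_of_trace _ htr
  exact sub_eq_zero.mp h0

end Aux

/-- let `R` be a countable graph with the extension property (for all disjoint
finite sets `A, B` of vertices there is a vertex `w ∉ A ∪ B` adjacent to every vertex of `A`
and to none of `B`), e.g. the Rado graph.  Then every finite dimensional quantum automorphism
of `R` is classical: all its entries pairwise commute. -/
theorem stmt16 {V H : Type*} [Countable V] [NormedAddCommGroup H] [InnerProductSpace ℂ H]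
    [CompleteSpace H] [FiniteDimensional ℂ H]
    (G : SimpleGraph V)
    (hext : ∀ A B : Finset V, Disjoint A B → ∃ w : V, w ∉ A ∧ w ∉ B ∧
      (∀ a ∈ A, G.Adj a w) ∧ (∀ b ∈ B, ¬ G.Adj b w))
    (u : V → V → H →L[ℂ] H) (hu : IsQuantumAut G u) :
    ∀ x y z w : V, Commute (u x y) (u z w) := by
  classical
  obtain ⟨⟨hproj, hrow, hcol, hrsum, hcsum⟩, hrel⟩ := hu
  intro x y z w
  by_cases hxz : x = z
  · subst hxz
    by_cases hyw : y = w
    · subst hyw; exact Commute.refl _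
    · show u x y * u x w = u x w * u x y
      rw [hrow x y w hyw, hrow x w y (Ne.symm hyw)]
  by_cases hyw : y = w
  · subst hyw
    show u x y * u z y = u z y * u x y
    rw [hcol y x z hxz, hcol y z x (Ne.symm hxz)]
  -- Main case : x ≠ z and y ≠ w.
  have hCy : {a | u a y ≠ 0}.Finite :=
    aux_support_finite (fun a => u a y) (fun a => (hproj a y).1) (fun a => (hproj a y).2)
      (fun i j hij => hcol y i j hij)
  have hCw : {a | u a w ≠ 0}.Finite :=
    aux_support_finite (fun a => u a w) (fun a => (hproj a w).1) (fun a => (hproj a w).2)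
      (fun i j hij => hcol w i j hij)
  set B : Finset V := (hCy.toFinset ∪ hCw.toFinset) \ {x, z} with hBdef
  have hdisj : Disjoint ({x, z} : Finset V) B := Finset.disjoint_sdiff
  obtain ⟨c, hcA, hcB, hcadj, hcnadj⟩ := hext {x, z} B hdisj
  have hcx : c ≠ x := fun h => hcA (by rw [h]; simp)
  have hcz : c ≠ z := fun h => hcA (by rw [h]; simp)
  have hxc : G.Adj x c := hcadj x (by simp)
  have hzc : G.Adj z c := hcadj z (by simp)
  have hmemB : ∀ a, (u a y ≠ 0 ∨ u a w ≠ 0) → a ≠ x → a ≠ z → a ∈ B := by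
    intro a h hax haz
    rw [hBdef]
    simp only [Finset.mem_sdiff, Finset.mem_union, Set.Finite.mem_toFinset,
      Set.mem_setOf_eq, Finset.mem_insert, Finset.mem_singleton]
    exact ⟨h, by push_neg; exact ⟨hax, haz⟩⟩
  have hucy : u c y = 0 := by
    by_contra h0
    exact hcB (hmemB c (Or.inl h0) hcx hcz)
  have hucw : u c w = 0 := by
    by_contra h0
    exact hcB (hmemB c (Or.inr h0) hcx hcz)
  have hRc : {v | u c v ≠ 0}.Finite :=
    aux_support_finite (fun v => u c v) (fun v => (hproj c v).1) (fun v => (hproj c v).2)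
      (fun i j hij => hrow c i j hij)
  set T : Finset V := hRc.toFinset.filter (fun v => G.Adj v y ∧ G.Adj v w) with hTdef
  set E : H →L[ℂ] H := ∑ v ∈ T, u c v with hEdef
  -- vanishing of the terms outside T
  have K1 : ∀ v, v ∉ T → u z w * u c v * u x y = 0 := by
    intro v hv
    by_cases h0 : u c v = 0
    · rw [h0, mul_zero, zero_mul]
    have hnand : ¬(G.Adj v y ∧ G.Adj v w) := by
      intro hcon
      exact hv (by
        rw [hTdef, Finset.mem_filter, Set.Finite.mem_toFinset]
        exact ⟨h0, hcon⟩)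
    rcases not_and_or.mp hnand with hny | hnw
    · have hkill : u c v * u x y = 0 := by
        apply hrel
        rintro ⟨h1, h2⟩
        by_cases hvy : v = y
        · exact hcx (h1.mpr hvy)
        · exact hny (h2.mp hxc.symm)
      rw [mul_assoc, hkill, mul_zero]
    · have hkill : u z w * u c v = 0 := by
        apply hrel
        rintro ⟨h1, h2⟩
        by_cases hvw : v = w
        · exact hcz (h1.mpr hvw.symm).symm
        · exact hnw (h2.mp hzc).symm
      rw [hkill, zero_mul]
  have Kmem : ∀ v ∈ T, u c v ≠ 0 ∧ G.Adj v y ∧ G.Adj v w := by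
    intro v hvT
    rw [hTdef, Finset.mem_filter, Set.Finite.mem_toFinset] at hvT
    exact ⟨hvT.1, hvT.2⟩
  have K2 : ∀ v ∈ T, ∀ a, a ∉ ({x, z} : Finset V) → u a y * u c v = 0 := by
    intro v hvT a ha
    obtain ⟨-, hAdjvy, -⟩ := Kmem v hvT
    by_cases h0 : u a y = 0
    · rw [h0, zero_mul]
    have hax : a ≠ x := fun h => ha (by rw [h]; simp)
    have haz : a ≠ z := fun h => ha (by rw [h]; simp)
    by_cases hac : a = c
    · rw [hac] at h0; exact absurd hucy h0
    have hnadj : ¬ G.Adj a c := hcnadj a (hmemB a (Or.inl h0) hax haz)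
    apply hrel
    rintro ⟨h1, h2⟩
    exact hnadj (h2.mpr hAdjvy.symm)
  have K3 : ∀ v ∈ T, ∀ a, a ∉ ({x, z} : Finset V) → u a w * u c v = 0 := by
    intro v hvT a ha
    obtain ⟨-, -, hAdjvw⟩ := Kmem v hvT
    by_cases h0 : u a w = 0
    · rw [h0, zero_mul]
    have hax : a ≠ x := fun h => ha (by rw [h]; simp)
    have haz : a ≠ z := fun h => ha (by rw [h]; simp)
    by_cases hac : a = c
    · rw [hac] at h0; exact absurd hucw h0
    have hnadj : ¬ G.Adj a c := hcnadj a (hmemB a (Or.inr h0) hax haz)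
    apply hrel
    rintro ⟨h1, h2⟩
    exact hnadj (h2.mpr hAdjvw.symm)
  -- main identities
  have hqEp : u z w * E * u x y = u z w * u x y := by
    have hEexp : u z w * E * u x y = ∑ v ∈ T, u z w * u c v * u x y := by
      rw [hEdef, Finset.mul_sum, Finset.sum_mul]
    rw [hEexp]
    ext ξ
    rw [ContinuousLinearMap.sum_apply]
    have h0 := (hrsum c ((u x y) ξ)).mapL (u z w)
    have h1 : HasSum (fun v => (u z w * u c v * u x y) ξ) ((u z w * u x y) ξ) := by
      simpa [ContinuousLinearMap.mul_apply] using h0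
    have h2 : HasSum (fun v => (u z w * u c v * u x y) ξ)
        (∑ v ∈ T, (u z w * u c v * u x y) ξ) :=
      hasSum_sum_of_ne_finset_zero (fun v hv => by rw [K1 v hv]; simp)
    exact h2.unique h1
  have hP1term : ∀ v ∈ T, (u x y + u z y) * u c v = u c v := by
    intro v hvT
    ext ξ
    have h0 := hcsum y ((u c v) ξ)
    have h1 : HasSum (fun a => (u a y * u c v) ξ) ((u c v) ξ) := by
      simpa [ContinuousLinearMap.mul_apply] using h0
    have h2 : HasSum (fun a => (u a y * u c v) ξ)
        (∑ a ∈ ({x, z} : Finset V), (u a y * u c v) ξ) :=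
      hasSum_sum_of_ne_finset_zero (fun a ha => by rw [K2 v hvT a ha]; simp)
    have h3 := h2.unique h1
    rw [Finset.sum_pair hxz] at h3
    rw [add_mul, ContinuousLinearMap.add_apply]
    exact h3
  have hP2term : ∀ v ∈ T, (u x w + u z w) * u c v = u c v := by
    intro v hvT
    ext ξ
    have h0 := hcsum w ((u c v) ξ)
    have h1 : HasSum (fun a => (u a w * u c v) ξ) ((u c v) ξ) := by
      simpa [ContinuousLinearMap.mul_apply] using h0
    have h2 : HasSum (fun a => (u a w * u c v) ξ)
        (∑ a ∈ ({x, z} : Finset V), (u a w * u c v) ξ) :=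
      hasSum_sum_of_ne_finset_zero (fun a ha => by rw [K3 v hvT a ha]; simp)
    have h3 := h2.unique h1
    rw [Finset.sum_pair hxz] at h3
    rw [add_mul, ContinuousLinearMap.add_apply]
    exact h3
  have hP1E : (u x y + u z y) * E = E := by
    rw [hEdef, Finset.mul_sum]
    exact Finset.sum_congr rfl hP1term
  have hP2E : (u x w + u z w) * E = E := by
    rw [hEdef, Finset.mul_sum]
    exact Finset.sum_congr rfl hP2term
  exact aux_main (u x y) (u z y) (u z w) (u x w) E
    (hproj x y).1 (hproj z w).1 (hproj x y).2 (hproj z w).2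
    (hrow x y w hyw) (hrow x w y (Ne.symm hyw)) (hrow z w y (Ne.symm hyw))
    hqEp hP1E hP2E
end
end
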